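/- arXiv:2104.06667 — 6 statements merged into one kernel-verified Lean document; each statement's English description precedes it below -/
import Mathlib

section
/- Suppose R ⟂ Y | X (ignorability), with π(X) = P(R=1|X) > 0 almost surely and m(X) = E[Y|X]. Then for any measurable function μ, E[μ(X) + (R/π(X))·(Y − μ(X))] = E[Y], i.e., the doubly robust representation identifies θ₀ = E[Y] whenever the propensity score is correctly specified, regardless of μ. -/
open MeasureTheory ProbabilityTheory Set

/-- If the independence condition holds for rational `Iic` preimages, the functions are
independent. -/
lemma indepFun_of_rat_iic {Ω' : Type*} [mΩ' : MeasurableSpace Ω'] (ν : Measure Ω')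
    [IsProbabilityMeasure ν] {f g : Ω' → ℝ} (hf : Measurable f) (hg : Measurable g)
    (h : ∀ q r : ℚ, ν (f ⁻¹' Iic (q : ℝ) ∩ g ⁻¹' Iic (r : ℝ))
      = ν (f ⁻¹' Iic (q : ℝ)) * ν (g ⁻¹' Iic (r : ℝ))) : IndepFun f g ν := by
  have hgen : ∀ (k : Ω' → ℝ), MeasurableSpace.comap k inferInstance
      = MeasurableSpace.generateFrom { s : Set Ω' | ∃ t ∈ ⋃ a : ℚ, {Iic (a : ℝ)}, k ⁻¹' t = s } := by
    intro k
    conv_lhs => rw [show (inferInstance : MeasurableSpace ℝ) = borel ℝ from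
      BorelSpace.measurable_eq, Real.borel_eq_generateFrom_Iic_rat]
    rw [MeasurableSpace.comap_generateFrom]
    congr 1
  refine IndepSets.indep hf.comap_le hg.comap_le (Real.isPiSystem_Iic_rat.comap f)
    (Real.isPiSystem_Iic_rat.comap g) (hgen f) (hgen g) ?_
  rintro t1 t2 ⟨s1, hs1, rfl⟩ ⟨s2, hs2, rfl⟩
  simp only [Set.mem_iUnion, Set.mem_singleton_iff] at hs1 hs2
  obtain ⟨q, rfl⟩ := hs1
  obtain ⟨r, rfl⟩ := hs2
  simp only [Kernel.const_apply, MeasureTheory.ae_dirac_eq, Filter.eventually_pure]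
  exact h q r

/-- Conditional independence implies the factorization for rational `Iic` preimages, a.e. under
the conditional expectation kernel. -/
lemma ae_indepFun_condExpKernel {Ω : Type*} {m : MeasurableSpace Ω} [mΩ : MeasurableSpace Ω]
    [StandardBorelSpace Ω] (μ : Measure Ω) [IsFiniteMeasure μ]
    (hm : m ≤ mΩ) {R Y : Ω → ℝ}
    (hCI : CondIndepFun m hm R Y μ) :
    ∀ᵐ ω ∂μ, ∀ q r : ℚ,
      condExpKernel μ m ω (R ⁻¹' Iic (q : ℝ) ∩ Y ⁻¹' Iic (r : ℝ))
        = condExpKernel μ m ω (R ⁻¹' Iic (q : ℝ)) * condExpKernel μ m ω (Y ⁻¹' Iic (r : ℝ)) := by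
  rw [ae_all_iff]
  intro q
  rw [ae_all_iff]
  intro r
  refine ae_of_ae_trim hm ?_
  exact hCI (R ⁻¹' Iic (q : ℝ)) (Y ⁻¹' Iic (r : ℝ))
    ⟨Iic (q : ℝ), measurableSet_Iic, rfl⟩ ⟨Iic (r : ℝ), measurableSet_Iic, rfl⟩

/-- Doubly robust identification with a correctly specified propensity score:
if `R ⟂ Y | X` (ignorability), `π(X) := E[R | σ(X)] > 0` a.s. and `μf` is any measurable
outcome working model, then `E[μf(X) + (R/π(X))·(Y − μf(X))] = E[Y]`. -/
theorem dr_identification_correct_ps {Ω : Type*} [mΩ : MeasurableSpace Ω]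
    [StandardBorelSpace Ω] (μ : Measure Ω) [IsProbabilityMeasure μ] {p : ℕ}
    (X : Ω → Fin p → ℝ) (hX : Measurable X) (R : Ω → ℝ) (hR : Measurable R)
    (hRbin : ∀ ω, R ω = 0 ∨ R ω = 1) (Y : Ω → ℝ) (hY : Measurable Y)
    (hYint : Integrable Y μ)
    (mX : MeasurableSpace Ω) (hmXdef : mX = MeasurableSpace.comap X inferInstance)
    (hmX : mX ≤ mΩ)
    (hCI : CondIndepFun mX hmX R Y μ)
    (hπpos : ∀ᵐ ω ∂μ, 0 < (μ[R | mX]) ω)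
    (μf : (Fin p → ℝ) → ℝ) (hμf : Measurable μf)
    (hint1 : Integrable (fun ω => μf (X ω) / (μ[R | mX]) ω) μ)
    (hint2 : Integrable (fun ω => Y ω / (μ[R | mX]) ω) μ) :
    ∫ ω, (μf (X ω) + (R ω / (μ[R | mX]) ω) * (Y ω - μf (X ω))) ∂μ = ∫ ω, Y ω ∂μ := by
  set π : Ω → ℝ := μ[R | mX] with hπdef
  -- basic facts about R
  have hRabs : ∀ ω, ‖R ω‖ ≤ 1 := by
    intro ω; rcases hRbin ω with h | h <;> simp [h]
  have hRint : Integrable R μ :=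
    (integrable_const (1 : ℝ)).mono' hR.aestronglyMeasurable
      (Filter.Eventually.of_forall hRabs)
  have hRYint : Integrable (fun ω => R ω * Y ω) μ := by
    refine hYint.norm.mono' (hR.mul hY).aestronglyMeasurable ?_
    refine Filter.Eventually.of_forall fun ω => ?_
    rw [norm_mul]
    calc ‖R ω‖ * ‖Y ω‖ ≤ 1 * ‖Y ω‖ := by
          exact mul_le_mul_of_nonneg_right (hRabs ω) (norm_nonneg _)
      _ = ‖Y ω‖ := one_mul _
  -- π is mX-strongly measurable
  have hπ_sm : StronglyMeasurable[mX] π := stronglyMeasurable_condExp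
  have hπ_ne : ∀ᵐ ω ∂μ, π ω ≠ 0 := by
    filter_upwards [hπpos] with ω hω using ne_of_gt hω
  -- π ≤ 1 a.e.
  have hπle1 : ∀ᵐ ω ∂μ, π ω ≤ 1 := by
    have h1 : R ≤ᵐ[μ] fun _ => (1 : ℝ) :=
      Filter.Eventually.of_forall fun ω => by
        rcases hRbin ω with h | h <;> simp [h]
    have hmono := condExp_mono (μ := μ) (m := mX) hRint (integrable_const 1) h1
    filter_upwards [hmono] with ω hω
    rw [condExp_const hmX] at hω
    exact hω
  -- key conditional independence consequence: μ[R * Y | mX] =ᵐ π * μ[Y | mX]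
  have hkernel : ∀ᵐ ω ∂μ, IndepFun R Y (condExpKernel (mΩ := mΩ) μ mX ω) := by
    filter_upwards [ae_indepFun_condExpKernel (mΩ := mΩ) μ hmX hCI] with ω hω
    exact indepFun_of_rat_iic (mΩ' := mΩ) _ hR hY hω
  have hRY_cond : μ[(fun ω => R ω * Y ω) | mX]
      =ᵐ[μ] fun ω => π ω * (μ[Y | mX]) ω := by
    have hA := condExp_ae_eq_integral_condExpKernel (mΩ := mΩ) hmX hRYint
    have hB := condExp_ae_eq_integral_condExpKernel (mΩ := mΩ) hmX hRint
    have hC := condExp_ae_eq_integral_condExpKernel (mΩ := mΩ) hmX hYint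
    filter_upwards [hA, hB, hC, hkernel] with ω h1 h2 h3 hind
    rw [h1, hπdef, h2, h3]
    have := hind.integral_mul_eq_mul_integral hR.aestronglyMeasurable hY.aestronglyMeasurable
    simpa [Pi.mul_apply] using this
  -- mX-measurability of μf ∘ X
  have hμfX_m : Measurable[mX] fun ω => μf (X ω) := by
    have hXm : Measurable[mX] X := by
      rw [hmXdef]; exact Measurable.of_comap_le le_rfl
    exact hμf.comp hXm
  have hfdiv_sm : StronglyMeasurable[mX] fun ω => μf (X ω) / π ω :=
    ((hμfX_m.div hπ_sm.measurable)).stronglyMeasurable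
  -- integrability of the three summands
  have hg1 : Integrable (fun ω => μf (X ω)) μ := by
    refine hint1.norm.mono' (hμf.comp hX).aestronglyMeasurable ?_
    filter_upwards [hπ_ne, hπle1, hπpos] with ω h0 h1 hpos
    have hrw : μf (X ω) = (μf (X ω) / π ω) * π ω := by field_simp
    conv_lhs => rw [hrw]
    rw [norm_mul]
    calc ‖μf (X ω) / π ω‖ * ‖π ω‖ ≤ ‖μf (X ω) / π ω‖ * 1 := by
          refine mul_le_mul_of_nonneg_left ?_ (norm_nonneg _)
          rw [Real.norm_eq_abs, abs_of_pos hpos]; exact h1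
      _ = ‖μf (X ω) / π ω‖ := mul_one _
  have hg3 : Integrable (fun ω => (μf (X ω) / π ω) * R ω) μ := by
    have hm1 : Measurable[mΩ] fun ω => (μf (X ω) / π ω) * R ω :=
      ((hμfX_m.mono hmX le_rfl).div (hπ_sm.measurable.mono hmX le_rfl)).mul hR
    refine hint1.norm.mono' hm1.aestronglyMeasurable ?_
    refine Filter.Eventually.of_forall fun ω => ?_
    rw [norm_mul]
    calc ‖μf (X ω) / π ω‖ * ‖R ω‖ ≤ ‖μf (X ω) / π ω‖ * 1 :=
          mul_le_mul_of_nonneg_left (hRabs ω) (norm_nonneg _)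
      _ = ‖μf (X ω) / π ω‖ := mul_one _
  have hg2 : Integrable (fun ω => (π ω)⁻¹ * (R ω * Y ω)) μ := by
    have hm2 : Measurable[mΩ] fun ω => (π ω)⁻¹ * (R ω * Y ω) :=
      ((hπ_sm.measurable.mono hmX le_rfl).inv).mul (hR.mul hY)
    refine hint2.norm.mono' hm2.aestronglyMeasurable ?_
    refine Filter.Eventually.of_forall fun ω => ?_
    rw [norm_mul, norm_mul]
    calc ‖(π ω)⁻¹‖ * (‖R ω‖ * ‖Y ω‖) ≤ ‖(π ω)⁻¹‖ * (1 * ‖Y ω‖) := by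
          refine mul_le_mul_of_nonneg_left ?_ (norm_nonneg _)
          exact mul_le_mul_of_nonneg_right (hRabs ω) (norm_nonneg _)
      _ = ‖Y ω / π ω‖ := by rw [one_mul, div_eq_mul_inv, norm_mul, mul_comm]
  -- pull-out property computations
  have hpull3 : μ[(fun ω => (μf (X ω) / π ω) * R ω) | mX]
      =ᵐ[μ] fun ω => (μf (X ω) / π ω) * π ω := by
    have h := condExp_mul_of_stronglyMeasurable_left (μ := μ) hfdiv_sm
      (g := R) (by exact hg3) hRint
    exact h
  have hpull2 : μ[(fun ω => (π ω)⁻¹ * (R ω * Y ω)) | mX]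
      =ᵐ[μ] fun ω => (π ω)⁻¹ * (μ[(fun ω => R ω * Y ω) | mX]) ω := by
    have hinv_sm : StronglyMeasurable[mX] fun ω => (π ω)⁻¹ :=
      (hπ_sm.measurable.inv).stronglyMeasurable
    have h := condExp_mul_of_stronglyMeasurable_left (μ := μ) hinv_sm
      (g := fun ω => R ω * Y ω) (by exact hg2) hRYint
    exact h
  -- integral identities
  have hI3 : ∫ ω, (μf (X ω) / π ω) * R ω ∂μ = ∫ ω, μf (X ω) ∂μ := by
    rw [← integral_condExp hmX (f := fun ω => (μf (X ω) / π ω) * R ω) (μ := μ)]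
    rw [integral_congr_ae hpull3]
    refine integral_congr_ae ?_
    filter_upwards [hπ_ne] with ω h0
    field_simp
  have hI2 : ∫ ω, (π ω)⁻¹ * (R ω * Y ω) ∂μ = ∫ ω, Y ω ∂μ := by
    rw [← integral_condExp hmX (f := fun ω => (π ω)⁻¹ * (R ω * Y ω)) (μ := μ)]
    rw [integral_congr_ae hpull2]
    have heq : (fun ω => (π ω)⁻¹ * (μ[(fun ω => R ω * Y ω) | mX]) ω)
        =ᵐ[μ] μ[Y | mX] := by
      filter_upwards [hRY_cond, hπ_ne] with ω h1 h0
      rw [h1]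
      field_simp
    rw [integral_congr_ae heq, integral_condExp hmX]
  -- put everything together
  have hsplit : (fun ω => μf (X ω) + (R ω / π ω) * (Y ω - μf (X ω)))
      =ᵐ[μ] fun ω => μf (X ω) + ((π ω)⁻¹ * (R ω * Y ω) - (μf (X ω) / π ω) * R ω) := by
    refine Filter.Eventually.of_forall fun ω => ?_
    simp only
    by_cases h0 : π ω = 0
    · simp [h0]
    · field_simp
  have hg23 : Integrable (fun ω => (π ω)⁻¹ * (R ω * Y ω) - (μf (X ω) / π ω) * R ω) μ :=
    hg2.sub hg3
  rw [integral_congr_ae hsplit, integral_add hg1 hg23, integral_sub hg2 hg3, hI2, hI3]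
  ring
end

section
/- Under the diverging-intercept logistic model π(X) = g(β₁ + X^T β₋₁) with π = E[π(X)], if the moment generating function of X exists at ±β₋₁, then (1/π)·(1−π)/MGF_X(−β₋₁) ≤ exp(−β₁) ≤ (1/π)·MGF_X(β₋₁). -/
open MeasureTheory

/-- The logistic function `g(u) = exp(u)/(1+exp(u))`. -/
noncomputable def logistic (u : ℝ) : ℝ := Real.exp u / (1 + Real.exp u)

lemma logistic_nonneg (u : ℝ) : 0 ≤ logistic u := by
  unfold logistic
  positivity

lemma logistic_le_one (u : ℝ) : logistic u ≤ 1 := by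
  unfold logistic
  rw [div_le_one (by positivity)]
  linarith

lemma one_sub_logistic (u : ℝ) : 1 - logistic u = logistic u * Real.exp (-u) := by
  unfold logistic
  have h := Real.exp_pos u
  rw [Real.exp_neg]
  field_simp
  ring

lemma logistic_le_exp (u : ℝ) : logistic u ≤ Real.exp u := by
  unfold logistic
  rw [div_le_iff₀ (by positivity)]
  nlinarith [Real.exp_pos u]

lemma continuous_logistic : Continuous logistic :=
  Real.continuous_exp.div (continuous_const.add Real.continuous_exp)
    (fun x => by positivity)

lemma key_ineq (a b : ℝ) :
    logistic a * Real.exp (-a) + logistic b * Real.exp (-b) ≤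
      logistic a * Real.exp (-b) + logistic b * Real.exp (-a) := by
  have h : (logistic a - logistic b) * (Real.exp (-a) - Real.exp (-b)) ≤ 0 := by
    rcases le_total a b with hab | hab
    · apply mul_nonpos_of_nonpos_of_nonneg
      · have : logistic a ≤ logistic b := by
          unfold logistic
          rw [div_le_div_iff₀ (by positivity) (by positivity)]
          nlinarith [Real.exp_le_exp.mpr hab, Real.exp_pos a, Real.exp_pos b]
        linarith
      · have : Real.exp (-b) ≤ Real.exp (-a) := Real.exp_le_exp.mpr (by linarith)
        linarith
    · apply mul_nonpos_of_nonneg_of_nonpos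
      · have : logistic b ≤ logistic a := by
          unfold logistic
          rw [div_le_div_iff₀ (by positivity) (by positivity)]
          nlinarith [Real.exp_le_exp.mpr hab, Real.exp_pos a, Real.exp_pos b]
        linarith
      · have : Real.exp (-a) ≤ Real.exp (-b) := Real.exp_le_exp.mpr (by linarith)
        linarith
  nlinarith [h]

/-- Under the diverging-intercept logistic model `π(X) = g(β₁ + Xᵀβ₋₁)` with
`π = E[π(X)] ∈ (0,1)`, if the MGF of `X` exists at `±β₋₁`, then
`(1/π)·(1−π)/MGF_X(−β₋₁) ≤ exp(−β₁) ≤ (1/π)·MGF_X(β₋₁)`. -/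
theorem diverging_intercept_bounds {Ω : Type*} [MeasurableSpace Ω] (μ : Measure Ω)
    [IsProbabilityMeasure μ] {p : ℕ} (X : Ω → Fin p → ℝ) (hXm : AEMeasurable X μ)
    (β₁ : ℝ) (β : Fin p → ℝ)
    (hMGFpos : Integrable (fun ω => Real.exp (∑ j, β j * X ω j)) μ)
    (hMGFneg : Integrable (fun ω => Real.exp (-∑ j, β j * X ω j)) μ)
    (πN : ℝ) (hπN : πN = ∫ ω, logistic (β₁ + ∑ j, β j * X ω j) ∂μ)
    (hπ : πN ∈ Set.Ioo (0 : ℝ) 1) :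
    (1 / πN) * (1 - πN) / (∫ ω, Real.exp (-∑ j, β j * X ω j) ∂μ) ≤ Real.exp (-β₁) ∧
      Real.exp (-β₁) ≤ (1 / πN) * ∫ ω, Real.exp (∑ j, β j * X ω j) ∂μ := by
  set S : Ω → ℝ := fun ω => ∑ j, β j * X ω j with hS
  have hSm : AEMeasurable S μ := by
    apply Finset.aemeasurable_fun_sum
    intro j _
    exact (aemeasurable_const.mul ((measurable_pi_apply j).comp_aemeasurable hXm))
  set F : Ω → ℝ := fun ω => logistic (β₁ + S ω) with hF
  set H : Ω → ℝ := fun ω => Real.exp (-(β₁ + S ω)) with hHdef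
  have hH_eq : H = fun ω => Real.exp (-β₁) * Real.exp (-S ω) := by
    funext ω
    show Real.exp (-(β₁ + S ω)) = _
    rw [neg_add, Real.exp_add]
  have hHint : Integrable H μ := by
    rw [hH_eq]; exact hMGFneg.const_mul _
  have hFmeas : AEStronglyMeasurable F μ :=
    (continuous_logistic.measurable.comp_aemeasurable (aemeasurable_const.add hSm)).aestronglyMeasurable
  have hFint : Integrable F μ := by
    apply Integrable.mono' (integrable_const (1 : ℝ)) hFmeas
    filter_upwards with ω
    rw [Real.norm_eq_abs, abs_of_nonneg (logistic_nonneg _)]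
    exact logistic_le_one _
  have hFH_eq : (fun ω => F ω * H ω) = fun ω => 1 - F ω := by
    funext ω
    rw [hF, hHdef, ← one_sub_logistic]
  have hFHint : Integrable (fun ω => F ω * H ω) μ := by
    rw [hFH_eq]; exact (integrable_const 1).sub hFint
  have hπF : πN = ∫ ω, F ω ∂μ := hπN
  -- positivity of the MGFs
  have hMpos : 0 < ∫ ω, Real.exp (S ω) ∂μ := integral_exp_pos hMGFpos
  have hMneg : 0 < ∫ ω, Real.exp (-S ω) ∂μ :=
    integral_exp_pos (f := fun ω => -S ω) hMGFneg
  -- covariance inequality via product measure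
  have hcov : ∫ ω, F ω * H ω ∂μ ≤ (∫ ω, F ω ∂μ) * ∫ ω, H ω ∂μ := by
    have h1 : Integrable (fun z : Ω × Ω => (F z.1 * H z.1) * (1 : ℝ)) (μ.prod μ) :=
      hFHint.mul_prod (integrable_const 1)
    have h2 : Integrable (fun z : Ω × Ω => (1 : ℝ) * (F z.2 * H z.2)) (μ.prod μ) :=
      (integrable_const 1).mul_prod hFHint
    have h3 : Integrable (fun z : Ω × Ω => F z.1 * H z.2) (μ.prod μ) :=
      hFint.mul_prod hHint
    have h4 : Integrable (fun z : Ω × Ω => H z.1 * F z.2) (μ.prod μ) :=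
      hHint.mul_prod hFint
    have hmono : ∫ z : Ω × Ω, ((F z.1 * H z.1) * 1 + 1 * (F z.2 * H z.2)) ∂(μ.prod μ)
        ≤ ∫ z : Ω × Ω, (F z.1 * H z.2 + H z.1 * F z.2) ∂(μ.prod μ) := by
      apply integral_mono (h1.add h2) (h3.add h4)
      intro z
      have := key_ineq (β₁ + S z.1) (β₁ + S z.2)
      simp only [Pi.add_apply, hF, hHdef]
      nlinarith [this]
    rw [integral_add h1 h2, integral_add h3 h4,
      integral_prod_mul (fun ω => F ω * H ω) (fun _ => (1 : ℝ)),
      integral_prod_mul (fun _ => (1 : ℝ)) (fun ω => F ω * H ω),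
      integral_prod_mul F H, integral_prod_mul H F] at hmono
    simp only [integral_const, measure_univ, ENNReal.toReal_one, probReal_univ, one_smul, mul_one,
      one_mul] at hmono
    nlinarith [hmono]
  -- upper bound
  have hA : πN ≤ Real.exp β₁ * ∫ ω, Real.exp (S ω) ∂μ := by
    rw [hπF, ← integral_const_mul]
    apply integral_mono hFint (hMGFpos.const_mul _)
    intro ω
    calc F ω ≤ Real.exp (β₁ + S ω) := logistic_le_exp _
      _ = Real.exp β₁ * Real.exp (S ω) := Real.exp_add _ _
  have hupper : Real.exp (-β₁) ≤ (1 / πN) * ∫ ω, Real.exp (S ω) ∂μ := by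
    rw [one_div, inv_mul_eq_div, le_div_iff₀ hπ.1]
    calc Real.exp (-β₁) * πN ≤ Real.exp (-β₁) * (Real.exp β₁ * ∫ ω, Real.exp (S ω) ∂μ) :=
          mul_le_mul_of_nonneg_left hA (Real.exp_pos _).le
      _ = ∫ ω, Real.exp (S ω) ∂μ := by
          rw [← mul_assoc, ← Real.exp_add]; simp
  -- lower bound
  have hB : 1 - πN ≤ πN * (Real.exp (-β₁) * ∫ ω, Real.exp (-S ω) ∂μ) := by
    have h1 : ∫ ω, (1 - F ω) ∂μ = 1 - πN := by
      rw [integral_sub (integrable_const 1) hFint, integral_const]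
      simp [hπF]
    have h2 : ∫ ω, H ω ∂μ = Real.exp (-β₁) * ∫ ω, Real.exp (-S ω) ∂μ := by
      rw [hH_eq, integral_const_mul]
    calc 1 - πN = ∫ ω, F ω * H ω ∂μ := by rw [← h1, hFH_eq]
      _ ≤ (∫ ω, F ω ∂μ) * ∫ ω, H ω ∂μ := hcov
      _ = πN * (Real.exp (-β₁) * ∫ ω, Real.exp (-S ω) ∂μ) := by rw [← hπF, h2]
  have hlower : (1 / πN) * (1 - πN) / (∫ ω, Real.exp (-S ω) ∂μ) ≤ Real.exp (-β₁) := by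
    rw [div_le_iff₀ hMneg, one_div, inv_mul_eq_div, div_le_iff₀ hπ.1]
    nlinarith [hB]
  exact ⟨hlower, hupper⟩
end

section
/- Let (Z_{N,i})_{i≤N} be, for each N, i.i.d. real random variables, and let b_N > 0. If N^{−r} b_N^{−1−r} E[|Z_{N,1}|^{1+r}] → 0 for some 0 < r < 1, then N^{−1} Σ_{i=1}^N Z_{N,i} − E[Z_{N,1}] = o_p(b_N). -/
open MeasureTheory ProbabilityTheory Filter Topology

lemma wlln_pow_aux {y A w r : ℝ} (hy : 0 ≤ y) (hA : 0 ≤ A)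
    (hyA : y ≤ A) (hyw : y ≤ w) (hr0 : 0 < r) (hr1 : r < 1) :
    y ^ 2 ≤ A ^ ((1:ℝ) - r) * w ^ (1 + r) := by
  have h2 : y ^ 2 = y ^ ((1 - r) : ℝ) * y ^ ((1 + r) : ℝ) := by
    rw [← Real.rpow_natCast y 2, ← Real.rpow_add' hy (by norm_num)]
    norm_num
  rw [h2]
  exact mul_le_mul (Real.rpow_le_rpow hy hyA (by linarith))
    (Real.rpow_le_rpow hy hyw (by linarith)) (Real.rpow_nonneg hy _) (Real.rpow_nonneg hA _)

lemma wlln_markov {Ω : Type*} [MeasurableSpace Ω] (μ : Measure Ω) [IsProbabilityMeasure μ]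
    {g : Ω → ℝ} (hg : 0 ≤ᵐ[μ] g) (hgi : Integrable g μ) {c : ℝ} (hc : 0 < c) :
    μ {ω | c ≤ g ω} ≤ ENNReal.ofReal ((∫ ω, g ω ∂μ) / c) := by
  have h := mul_meas_ge_le_integral_of_nonneg hg hgi c
  have hfin : μ {ω | c ≤ g ω} ≠ ⊤ := (measure_lt_top μ _).ne
  rw [← ENNReal.ofReal_toReal hfin]
  apply ENNReal.ofReal_le_ofReal
  rw [le_div_iff₀ hc]
  linarith [show c * (μ {ω | c ≤ g ω}).toReal ≤ ∫ ω, g ω ∂μ from h, mul_comm c (μ {ω | c ≤ g ω}).toReal]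

/-- Triangular-array weak law of large numbers with rate: if for each `N` the variables
`Z_{N,1}, …, Z_{N,N}` are i.i.d. (identically distributed as `W_N`) and
`N^{−r} b_N^{−1−r} E[|W_N|^{1+r}] → 0` for some `0 < r < 1` and `b_N > 0`, then
`N⁻¹ Σ_{i=1}^N Z_{N,i} − E[W_N] = o_p(b_N)`, i.e. the normalized average converges
to `0` in probability. -/
theorem triangular_array_wlln {Ω : Type*} [mΩ : MeasurableSpace Ω] (μ : Measure Ω)
    [IsProbabilityMeasure μ] (Z : (N : ℕ) → Fin N → Ω → ℝ) (W : ℕ → Ω → ℝ)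
    (hmeas : ∀ N i, Measurable (Z N i)) (hWmeas : ∀ N, Measurable (W N))
    (hindep : ∀ N, iIndepFun (Z N) μ)
    (hident : ∀ N, ∀ i : Fin N, IdentDistrib (Z N i) (W N) μ μ)
    (hWint : ∀ N, Integrable (W N) μ)
    (b : ℕ → ℝ) (hb : ∀ N, 0 < b N) (r : ℝ) (hr : r ∈ Set.Ioo (0 : ℝ) 1)
    (hmom : ∀ N, Integrable (fun ω => |W N ω| ^ (1 + r)) μ)
    (hrate : Filter.Tendsto
      (fun N : ℕ => (N : ℝ) ^ (-r) * (b N) ^ (-(1 + r)) * ∫ ω, |W N ω| ^ (1 + r) ∂μ)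
      Filter.atTop (nhds 0)) :
    TendstoInMeasure μ
      (fun (N : ℕ) ω => ((N : ℝ)⁻¹ * (∑ i, Z N i ω) - ∫ ω', W N ω' ∂μ) / b N)
      Filter.atTop (fun _ => (0 : ℝ)) := by
  obtain ⟨hr0, hr1⟩ := hr
  set M : ℕ → ℝ := fun N => ∫ ω, |W N ω| ^ (1 + r) ∂μ with hM
  set a : ℕ → ℝ := fun N => (N : ℝ) ^ (-r) * (b N) ^ (-(1 + r)) * M N with ha
  have hMnn : ∀ N, 0 ≤ M N := fun N =>
    integral_nonneg fun ω => Real.rpow_nonneg (abs_nonneg _) _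
  have hann : ∀ N, 0 ≤ a N := fun N => by
    have h1 : (0:ℝ) ≤ (N : ℝ) ^ (-r) := Real.rpow_nonneg (Nat.cast_nonneg N) _
    have h2 : (0:ℝ) ≤ (b N) ^ (-(1 + r)) := Real.rpow_nonneg (hb N).le _
    exact mul_nonneg (mul_nonneg h1 h2) (hMnn N)
  rw [tendstoInMeasure_iff_dist]
  intro ε hε
  have key : ∀ N : ℕ, 1 ≤ N → a N ≤ ε / 2 →
      μ {ω | ε ≤ dist (((N : ℝ)⁻¹ * (∑ i, Z N i ω) - ∫ ω', W N ω' ∂μ) / b N) 0}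
        ≤ ENNReal.ofReal ((1 + 4 / ε ^ 2) * a N) := by
    intro N hN haN
    have hN0 : (0:ℝ) < N := by exact_mod_cast hN
    set T : ℝ := N * b N with hT
    have hT0 : 0 < T := mul_pos hN0 (hb N)
    set Y : Fin N → Ω → ℝ := fun i => truncation (Z N i) T with hYdef
    set Yt : Ω → ℝ := truncation (W N) T with hYtdef
    have hg : Measurable (Set.indicator (Set.Ioc (-T) T) (id : ℝ → ℝ)) :=
      measurable_id.indicator measurableSet_Ioc
    have hYmeas : ∀ i, Measurable (Y i) := fun i => hg.comp (hmeas N i)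
    have hYtmeas : Measurable Yt := hg.comp (hWmeas N)
    have hYmem : ∀ i, MemLp (Y i) 2 μ := fun i =>
      (hmeas N i).aestronglyMeasurable.memLp_truncation
    have hYtid : ∀ i, IdentDistrib (Y i) Yt μ μ := fun i => (hident N i).truncation
    have hYint : ∀ i, Integrable (Y i) μ := fun i =>
      (hmeas N i).aestronglyMeasurable.integrable_truncation
    have hYtint : Integrable Yt μ := (hWmeas N).aestronglyMeasurable.integrable_truncation
    -- the truncated mean
    have hEY : (∫ ω, (∑ i, Y i) ω ∂μ) = N * ∫ ω, Yt ω ∂μ := by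
      simp only [Finset.sum_apply]
      rw [integral_finset_sum _ fun i _ => hYint i]
      have : ∀ i : Fin N, (∫ ω, Y i ω ∂μ) = ∫ ω, Yt ω ∂μ := fun i =>
        (hYtid i).integral_eq
      simp [this, Finset.sum_const, Finset.card_univ, nsmul_eq_mul]
    -- bias estimate
    have hTrM : T ^ (-r) * M N = a N * b N := by
      have e1 : T ^ (-r) = (N:ℝ) ^ (-r) * (b N) ^ (-r) := by
        rw [hT, Real.mul_rpow hN0.le (hb N).le]
      have e2 : (b N) ^ (-r) = (b N) ^ (-(1+r)) * b N := by
        rw [show -r = -(1+r) + 1 by ring, Real.rpow_add (hb N), Real.rpow_one]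
      rw [ha, e1, e2]; ring
    have hbias : |(∫ ω, Yt ω ∂μ) - ∫ ω', W N ω' ∂μ| ≤ ε / 2 * b N := by
      have hpt : ∀ ω, |Yt ω - W N ω| ≤ T ^ (-r) * |W N ω| ^ (1 + r) := by
        intro ω
        rcases lt_or_ge (|W N ω|) T with h | h
        · rw [hYtdef, truncation_eq_self h, sub_self, abs_zero]
          positivity
        · have h1 : |Yt ω - W N ω| ≤ |W N ω| := by
            rcases lt_or_ge (|W N ω|) T with h' | h'
            · rw [hYtdef, truncation_eq_self h', sub_self, abs_zero]; positivity
            · have : Yt ω = W N ω ∨ Yt ω = 0 := by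
                rw [hYtdef]
                simp only [truncation, Set.indicator, Function.comp_apply]
                split_ifs with hmem
                · exact Or.inl rfl
                · exact Or.inr rfl
              rcases this with h2 | h2 <;> simp [h2, abs_nonneg]
          have hTr : T ^ r ≤ |W N ω| ^ r :=
            Real.rpow_le_rpow hT0.le h hr0.le
          have hinv : T ^ (-r) * T ^ r = 1 := by
            rw [← Real.rpow_add hT0]; simp
          have heq : |W N ω| ^ ((1:ℝ) + r) = |W N ω| ^ r * |W N ω| := by
            rw [show (1:ℝ) + r = r + 1 by ring, Real.rpow_add' (abs_nonneg _) (by positivity),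
              Real.rpow_one]
          calc |Yt ω - W N ω| ≤ |W N ω| := h1
            _ = (T ^ (-r) * T ^ r) * |W N ω| := by rw [hinv, one_mul]
            _ ≤ T ^ (-r) * |W N ω| ^ r * |W N ω| :=
                mul_le_mul_of_nonneg_right (mul_le_mul_of_nonneg_left hTr
                  (Real.rpow_pos_of_pos hT0 (-r)).le) (abs_nonneg _)
            _ = T ^ (-r) * |W N ω| ^ (1 + r) := by rw [heq]; ring
      have h2 : |(∫ ω, Yt ω ∂μ) - ∫ ω', W N ω' ∂μ| ≤ T ^ (-r) * M N := by
        rw [← integral_sub hYtint (hWint N)]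
        calc |∫ ω, (Yt ω - W N ω) ∂μ| ≤ ∫ ω, |Yt ω - W N ω| ∂μ := by
              simpa [Real.norm_eq_abs] using
                norm_integral_le_integral_norm (μ := μ) (fun ω => Yt ω - W N ω)
          _ ≤ ∫ ω, T ^ (-r) * |W N ω| ^ (1 + r) ∂μ :=
              integral_mono (hYtint.sub (hWint N)).abs ((hmom N).const_mul _)
                fun ω => hpt ω
          _ = T ^ (-r) * M N := integral_const_mul _ _
      calc |(∫ ω, Yt ω ∂μ) - ∫ ω', W N ω' ∂μ| ≤ T ^ (-r) * M N := h2
        _ = a N * b N := hTrM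
        _ ≤ ε / 2 * b N := mul_le_mul_of_nonneg_right haN (hb N).le
    -- set inclusion
    have hc : (0:ℝ) < (N:ℝ) * (ε/2) * b N :=
      mul_pos (mul_pos hN0 (half_pos hε)) (hb N)
    have hsub : {ω | ε ≤ dist (((N : ℝ)⁻¹ * (∑ i, Z N i ω) - ∫ ω', W N ω' ∂μ) / b N) 0} ⊆
        (⋃ i, {ω | T ≤ |Z N i ω|}) ∪
          {ω | (N:ℝ) * (ε/2) * b N ≤ |(∑ i, Y i) ω - ∫ ω, (∑ i, Y i) ω ∂μ|} := by
      intro ω hω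
      rw [Set.mem_union]
      by_contra hcon
      push_neg at hcon
      obtain ⟨h1, h2⟩ := hcon
      simp only [Set.mem_iUnion, Set.mem_setOf_eq, not_exists, not_le] at h1 h2
      have hZY : ∀ i, Y i ω = Z N i ω := fun i => truncation_eq_self (h1 i)
      have e1 : (∑ i, Z N i ω) = (∑ i, Y i) ω := by
        simp only [Finset.sum_apply]
        exact (Finset.sum_congr rfl fun i _ => hZY i).symm
      have hrw : (N : ℝ)⁻¹ * (∑ i, Z N i ω) - ∫ ω', W N ω' ∂μ =
          (N:ℝ)⁻¹ * ((∑ i, Y i) ω - ∫ ω, (∑ i, Y i) ω ∂μ)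
            + ((∫ ω, Yt ω ∂μ) - ∫ ω', W N ω' ∂μ) := by
        rw [e1, hEY]
        field_simp
        ring
      have habs : |(N : ℝ)⁻¹ * (∑ i, Z N i ω) - ∫ ω', W N ω' ∂μ| < ε * b N := by
        rw [hrw]
        calc |(N:ℝ)⁻¹ * ((∑ i, Y i) ω - ∫ ω, (∑ i, Y i) ω ∂μ)
              + ((∫ ω, Yt ω ∂μ) - ∫ ω', W N ω' ∂μ)|
            ≤ |(N:ℝ)⁻¹ * ((∑ i, Y i) ω - ∫ ω, (∑ i, Y i) ω ∂μ)|
              + |(∫ ω, Yt ω ∂μ) - ∫ ω', W N ω' ∂μ| := abs_add_le _ _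
          _ < (N:ℝ)⁻¹ * ((N:ℝ) * (ε/2) * b N) + ε / 2 * b N := by
              apply add_lt_add_of_lt_of_le _ hbias
              rw [abs_mul, abs_inv, abs_of_pos hN0]
              exact mul_lt_mul_of_pos_left h2 (inv_pos.mpr hN0)
          _ = ε * b N := by field_simp; ring
      rw [Set.mem_setOf_eq, Real.dist_0_eq_abs, abs_div, abs_of_pos (hb N)] at hω
      have := (le_div_iff₀ (hb N)).mp hω
      linarith
    -- Markov part
    have hmarkov : ∀ i : Fin N, μ {ω | T ≤ |Z N i ω|} ≤
        ENNReal.ofReal (M N / T ^ ((1:ℝ) + r)) := by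
      intro i
      have hid : μ {ω | T ≤ |Z N i ω|} = μ {ω | T ≤ |W N ω|} := by
        have hs : MeasurableSet {x : ℝ | T ≤ |x|} :=
          measurableSet_le measurable_const measurable_abs
        exact (hident N i).comp measurable_id |>.measure_mem_eq hs
      rw [hid]
      have hsub2 : {ω | T ≤ |W N ω|} ⊆ {ω | T ^ ((1:ℝ)+r) ≤ |W N ω| ^ ((1:ℝ)+r)} :=
        fun ω h => Real.rpow_le_rpow hT0.le h (by linarith)
      calc μ {ω | T ≤ |W N ω|} ≤ μ {ω | T ^ ((1:ℝ)+r) ≤ |W N ω| ^ ((1:ℝ)+r)} :=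
            measure_mono hsub2
        _ ≤ ENNReal.ofReal (M N / T ^ ((1:ℝ)+r)) :=
            wlln_markov μ (Eventually.of_forall fun ω => Real.rpow_nonneg (abs_nonneg _) _)
              (hmom N) (Real.rpow_pos_of_pos hT0 _)
    -- variance part
    have hpair : (↑(Finset.univ : Finset (Fin N)) : Set (Fin N)).Pairwise
        fun i j => IndepFun (Y i) (Y j) μ := fun i _ j _ hij =>
      ((hindep N).indepFun hij).comp hg hg
    have hvar : variance (∑ i, Y i) μ = ∑ i, variance (Y i) μ :=
      IndepFun.variance_sum (fun i _ => hYmem i) hpair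
    have hYt2 : (∫ ω, Yt ω ^ 2 ∂μ) ≤ T ^ ((1:ℝ) - r) * M N := by
      have hpt : ∀ ω, Yt ω ^ 2 ≤ T ^ ((1:ℝ)-r) * |W N ω| ^ (1+r) := by
        intro ω
        have h1 : |Yt ω| ≤ T := le_trans (abs_truncation_le_bound _ _ _)
          (le_of_eq (abs_of_pos hT0))
        have h2 : |Yt ω| ≤ |W N ω| := abs_truncation_le_abs_self _ _ _
        calc Yt ω ^ 2 = |Yt ω| ^ 2 := (sq_abs _).symm
          _ ≤ _ := wlln_pow_aux (abs_nonneg _) hT0.le h1 h2 hr0 hr1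
      calc (∫ ω, Yt ω ^ 2 ∂μ) ≤ ∫ ω, T ^ ((1:ℝ)-r) * |W N ω| ^ (1+r) ∂μ :=
          integral_mono ((hWmeas N).aestronglyMeasurable.memLp_truncation
            (p := 2)).integrable_sq ((hmom N).const_mul _) hpt
        _ = T ^ ((1:ℝ)-r) * M N := integral_const_mul _ _
    have hvi : ∀ i : Fin N, variance (Y i) μ ≤ T ^ ((1:ℝ) - r) * M N := by
      intro i
      calc variance (Y i) μ ≤ ∫ ω, (Y i ω) ^ 2 ∂μ := by
            have := variance_le_expectation_sq (μ := μ) (X := Y i)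
              (hYmeas i).aestronglyMeasurable
            simpa using this
        _ = ∫ ω, Yt ω ^ 2 ∂μ := ((hYtid i).comp (measurable_id.pow_const 2)).integral_eq
        _ ≤ T ^ ((1:ℝ) - r) * M N := hYt2
    have hvarsum : variance (∑ i, Y i) μ ≤ N * (T ^ ((1:ℝ)-r) * M N) := by
      rw [hvar]
      calc ∑ i : Fin N, variance (Y i) μ ≤ ∑ _i : Fin N, T ^ ((1:ℝ)-r) * M N :=
            Finset.sum_le_sum fun i _ => hvi i
        _ = N * (T ^ ((1:ℝ)-r) * M N) := by
            simp [Finset.sum_const, Finset.card_univ, nsmul_eq_mul]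
    have hbne : b N ≠ 0 := (hb N).ne'
    have hNne : (N:ℝ) ≠ 0 := hN0.ne'
    have hεne : ε ≠ 0 := hε.ne'
    have hcheb : μ {ω | (N:ℝ) * (ε/2) * b N ≤ |(∑ i, Y i) ω - ∫ ω, (∑ i, Y i) ω ∂μ|}
        ≤ ENNReal.ofReal (4 / ε ^ 2 * a N) := by
      have h := meas_ge_le_variance_div_sq (μ := μ) (X := ∑ i, Y i)
        (memLp_finsetSum' Finset.univ fun i _ => hYmem i) hc
      refine h.trans (ENNReal.ofReal_le_ofReal ?_)
      have e3 : T ^ ((1:ℝ)-r) = ((N:ℝ) * (N:ℝ)^(-r)) * ((b N)^2 * (b N)^(-(1+r))) := by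
        rw [hT, Real.mul_rpow hN0.le (hb N).le]
        congr 1
        · rw [show (1:ℝ)-r = 1 + (-r) by ring, Real.rpow_add hN0, Real.rpow_one]
        · rw [show (1:ℝ)-r = 2 + (-(1+r)) by ring, Real.rpow_add (hb N)]
          norm_num [Real.rpow_two]
      calc variance (∑ i, Y i) μ / ((N:ℝ) * (ε/2) * b N) ^ 2
          ≤ ((N:ℝ) * (T ^ ((1:ℝ)-r) * M N)) / ((N:ℝ) * (ε/2) * b N) ^ 2 := by
            gcongr
        _ = 4 / ε ^ 2 * a N := by
            simp only [ha]
            rw [e3]; field_simp; ring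
    have hMa : (N:ℝ) * (M N / T ^ ((1:ℝ)+r)) = a N := by
      have e4 : T ^ ((1:ℝ)+r) = (N:ℝ)^((1:ℝ)+r) * (b N)^((1:ℝ)+r) := by
        rw [hT, Real.mul_rpow hN0.le (hb N).le]
      have e5 : (N:ℝ)^((1:ℝ)+r) = N * (N:ℝ)^r := by
        rw [Real.rpow_add hN0, Real.rpow_one]
      have e6 : (N:ℝ)^(-r) = ((N:ℝ)^r)⁻¹ := Real.rpow_neg hN0.le r
      have e7 : (b N)^(-(1+r)) = ((b N)^((1:ℝ)+r))⁻¹ := by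
        rw [← Real.rpow_neg (hb N).le]
      have h8 : (N:ℝ)^r ≠ 0 := (Real.rpow_pos_of_pos hN0 r).ne'
      have h9 : (b N)^((1:ℝ)+r) ≠ 0 := (Real.rpow_pos_of_pos (hb N) _).ne'
      simp only [ha]
      rw [e4, e5, e6, e7]
      field_simp
    have hU : μ (⋃ i, {ω | T ≤ |Z N i ω|}) ≤ ENNReal.ofReal (a N) := by
      calc μ (⋃ i, {ω | T ≤ |Z N i ω|}) ≤ ∑ i : Fin N, μ {ω | T ≤ |Z N i ω|} :=
            measure_iUnion_fintype_le _ _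
        _ ≤ ∑ _i : Fin N, ENNReal.ofReal (M N / T ^ ((1:ℝ)+r)) :=
            Finset.sum_le_sum fun i _ => hmarkov i
        _ = (N : ENNReal) * ENNReal.ofReal (M N / T ^ ((1:ℝ)+r)) := by
            simp [Finset.sum_const, Finset.card_univ, nsmul_eq_mul]
        _ = ENNReal.ofReal ((N:ℝ) * (M N / T ^ ((1:ℝ)+r))) := by
            rw [ENNReal.ofReal_mul (Nat.cast_nonneg N), ENNReal.ofReal_natCast]
        _ = ENNReal.ofReal (a N) := by rw [hMa]
    calc μ {ω | ε ≤ dist (((N : ℝ)⁻¹ * (∑ i, Z N i ω) - ∫ ω', W N ω' ∂μ) / b N) 0}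
        ≤ μ ((⋃ i, {ω | T ≤ |Z N i ω|}) ∪
            {ω | (N:ℝ) * (ε/2) * b N ≤ |(∑ i, Y i) ω - ∫ ω, (∑ i, Y i) ω ∂μ|}) :=
          measure_mono hsub
      _ ≤ μ (⋃ i, {ω | T ≤ |Z N i ω|}) +
            μ {ω | (N:ℝ) * (ε/2) * b N ≤ |(∑ i, Y i) ω - ∫ ω, (∑ i, Y i) ω ∂μ|} :=
          measure_union_le _ _
      _ ≤ ENNReal.ofReal (a N) + ENNReal.ofReal (4 / ε ^ 2 * a N) := add_le_add hU hcheb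
      _ = ENNReal.ofReal ((1 + 4 / ε ^ 2) * a N) := by
          rw [← ENNReal.ofReal_add (hann N) (mul_nonneg (by positivity) (hann N))]
          ring_nf

  have h0 : Tendsto (fun N => ENNReal.ofReal ((1 + 4 / ε ^ 2) * a N)) atTop (𝓝 0) := by
    rw [show (0 : ENNReal) = ENNReal.ofReal ((1 + 4 / ε ^ 2) * 0) by simp]
    exact (ENNReal.continuous_ofReal.tendsto _).comp (hrate.const_mul (1 + 4 / ε ^ 2))
  apply tendsto_of_tendsto_of_tendsto_of_le_of_le' tendsto_const_nhds h0
  · exact Eventually.of_forall fun N => zero_le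
  · have h1 : ∀ᶠ N in atTop, a N ≤ ε / 2 :=
      (hrate.eventually (gt_mem_nhds (by positivity : (0:ℝ) < ε/2))).mono fun N h => le_of_lt h
    filter_upwards [h1, eventually_ge_atTop 1] with N hN1 hN2
    exact key N hN2 hN1
end

section
/- (Restricted strong convexity transfers under offset reweighting.) Let ℓ_N(γ; a) = −N^{−1} Σ_i [R_i x_i^T γ − log(1 + a·exp(x_i^T γ))] for a ∈ (0,1], and define δℓ(Δ; a; γ) = ℓ_N(γ+Δ; a) − ℓ_N(γ; a) − Δ^T ∇_γ ℓ_N(γ; a). Then for all Δ and all a ∈ (0,1], δℓ(Δ; a; γ₀) ≥ a · δℓ(Δ; 1; γ₀). Consequently, if δℓ(Δ; 1; γ₀) ≥ κ‖Δ‖₂² for all Δ in a set A, then δℓ(Δ; a; γ₀) ≥ aκ‖Δ‖₂² on A. -/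
open Finset

/-- The offset logistic negative log-likelihood
`ℓ_N(γ; a) = −N⁻¹ Σ_i [R_i x_iᵀγ − log(1 + a·exp(x_iᵀγ))]`. -/
noncomputable def ellN {N d : ℕ} (R : Fin N → ℝ) (x : Fin N → Fin d → ℝ)
    (γ : Fin d → ℝ) (a : ℝ) : ℝ :=
  -(N : ℝ)⁻¹ * ∑ i, (R i * (∑ j, x i j * γ j) -
    Real.log (1 + a * Real.exp (∑ j, x i j * γ j)))

/-- The gradient `∇_γ ℓ_N(γ; a) = −N⁻¹ Σ_i (R_i − g(x_iᵀγ + log a)) x_i`. -/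
noncomputable def gradEllN {N d : ℕ} (R : Fin N → ℝ) (x : Fin N → Fin d → ℝ)
    (γ : Fin d → ℝ) (a : ℝ) : Fin d → ℝ := fun j =>
  -(N : ℝ)⁻¹ * ∑ i, (R i - logistic ((∑ k, x i k * γ k) + Real.log a)) * x i j

/-- The first-order Taylor remainder
`δℓ(Δ; a; γ) = ℓ_N(γ+Δ; a) − ℓ_N(γ; a) − Δᵀ ∇_γ ℓ_N(γ; a)`. -/
noncomputable def deltaEll {N d : ℕ} (R : Fin N → ℝ) (x : Fin N → Fin d → ℝ)
    (Δ : Fin d → ℝ) (a : ℝ) (γ : Fin d → ℝ) : ℝ :=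
  ellN R x (γ + Δ) a - ellN R x γ a - ∑ j, Δ j * gradEllN R x γ a j

/-- G a t = a e^t / (1 + a e^t). -/
noncomputable def Gfun (a t : ℝ) : ℝ := a * Real.exp t / (1 + a * Real.exp t)

lemma denom_pos {a t : ℝ} (ha : 0 < a) : 0 < 1 + a * Real.exp t := by
  positivity

/-- F a t = log(1 + a e^t) - a log(1 + e^t). -/
noncomputable def Ffun (a t : ℝ) : ℝ :=
  Real.log (1 + a * Real.exp t) - a * Real.log (1 + Real.exp t)

lemma hasDerivAt_logterm (a : ℝ) (ha : 0 < a) (t : ℝ) :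
    HasDerivAt (fun t => Real.log (1 + a * Real.exp t)) (Gfun a t) t := by
  have h1 : HasDerivAt (fun t => 1 + a * Real.exp t) (a * Real.exp t) t :=
    ((Real.hasDerivAt_exp t).const_mul a).const_add 1
  have := h1.log (ne_of_gt (denom_pos ha))
  simpa [Gfun] using this

lemma hasDerivAt_F (a : ℝ) (ha : 0 < a) (t : ℝ) :
    HasDerivAt (fun t => Ffun a t) (Gfun a t - a * Gfun 1 t) t := by
  have h1 := hasDerivAt_logterm a ha t
  have h2 := (hasDerivAt_logterm 1 one_pos t).const_mul a
  have := h1.fun_sub h2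
  simpa [Ffun, mul_comm] using this

lemma hasDerivAt_G (a : ℝ) (ha : 0 < a) (t : ℝ) :
    HasDerivAt (fun t => Gfun a t) (a * Real.exp t / (1 + a * Real.exp t) ^ 2) t := by
  have h1 : HasDerivAt (fun t => a * Real.exp t) (a * Real.exp t) t :=
    (Real.hasDerivAt_exp t).const_mul a
  have h2 : HasDerivAt (fun t => 1 + a * Real.exp t) (a * Real.exp t) t :=
    h1.const_add 1
  have h := h1.div h2 (ne_of_gt (denom_pos ha))
  have heq : (a * Real.exp t * (1 + a * Real.exp t) - a * Real.exp t * (a * Real.exp t)) /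
      (1 + a * Real.exp t) ^ 2 = a * Real.exp t / (1 + a * Real.exp t) ^ 2 := by
    ring
  rw [heq] at h
  exact h

/-- `F' = G a - a G 1` is monotone for `0 < a ≤ 1`. -/
lemma monotone_Fprime {a : ℝ} (ha : 0 < a) (ha1 : a ≤ 1) :
    Monotone (fun t => Gfun a t - a * Gfun 1 t) := by
  apply monotone_of_hasDerivAt_nonneg
    (f' := fun t => a * Real.exp t / (1 + a * Real.exp t) ^ 2
      - a * (Real.exp t / (1 + Real.exp t) ^ 2))
  · intro t
    have h1 := hasDerivAt_G a ha t
    have h2 := (hasDerivAt_G 1 one_pos t).const_mul a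
    have := h1.fun_sub h2
    simpa [mul_comm] using this
  · intro t
    have he : (0:ℝ) < Real.exp t := Real.exp_pos t
    have hd1 : (0:ℝ) < 1 + a * Real.exp t := denom_pos ha
    have hd2 : (0:ℝ) < 1 + Real.exp t := by positivity
    have hle : (1 + a * Real.exp t) ^ 2 ≤ (1 + Real.exp t) ^ 2 := by
      have : 1 + a * Real.exp t ≤ 1 + Real.exp t := by nlinarith
      nlinarith
    have : a * (Real.exp t / (1 + Real.exp t) ^ 2)
        ≤ a * (Real.exp t / (1 + a * Real.exp t) ^ 2) := by
      gcongr
    simpa [sub_nonneg, mul_div_assoc] using this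

/-- Tangent line inequality for F: `v * F'(u) ≤ F(u+v) - F(u)`. -/
lemma tangent_F {a : ℝ} (ha : 0 < a) (ha1 : a ≤ 1) (u v : ℝ) :
    v * (Gfun a u - a * Gfun 1 u) ≤ Ffun a (u + v) - Ffun a u := by
  have hdiff : Differentiable ℝ (fun t => Ffun a t) :=
    fun t => (hasDerivAt_F a ha t).differentiableAt
  have hderiv : ∀ t, deriv (fun t => Ffun a t) t = Gfun a t - a * Gfun 1 t :=
    fun t => (hasDerivAt_F a ha t).deriv
  rcases le_or_gt 0 v with hv | hv
  · have := (convex_Ici u).mul_sub_le_image_sub_of_le_deriv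
      (hdiff.continuous.continuousOn) (hdiff.differentiableOn)
      (fun t ht => by
        rw [hderiv]
        exact monotone_Fprime ha ha1 (le_of_lt (by simpa using ht)))
      u Set.self_mem_Ici (u + v) (by simp [hv]) (by linarith)
    simpa [mul_comm] using this
  · have := (convex_Iic u).image_sub_le_mul_sub_of_deriv_le
      (hdiff.continuous.continuousOn) (hdiff.differentiableOn)
      (fun t ht => by
        rw [hderiv]
        exact monotone_Fprime ha ha1 (le_of_lt (by simpa using ht)))
      (u + v) (by simp [le_of_lt hv]) u Set.self_mem_Iic (by linarith)
    simp only at this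
    nlinarith [this]

/-- Key pointwise inequality. -/
lemma key_ineq_s11 {a : ℝ} (ha : 0 < a) (ha1 : a ≤ 1) (u v : ℝ) :
    a * (Real.log (1 + Real.exp (u + v)) - Real.log (1 + Real.exp u) - v * Gfun 1 u)
    ≤ Real.log (1 + a * Real.exp (u + v)) - Real.log (1 + a * Real.exp u) - v * Gfun a u := by
  have h := tangent_F ha ha1 u v
  simp only [Ffun] at h
  nlinarith [h]

lemma logistic_add_log {a : ℝ} (ha : 0 < a) (S : ℝ) :
    logistic (S + Real.log a) = Gfun a S := by
  simp [logistic, Gfun, Real.exp_add, Real.exp_log ha, mul_comm]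

lemma deltaEll_eq {N d : ℕ} (R : Fin N → ℝ) (x : Fin N → Fin d → ℝ)
    (Δ : Fin d → ℝ) (γ : Fin d → ℝ) {a : ℝ} (ha : 0 < a) :
    deltaEll R x Δ a γ = (N : ℝ)⁻¹ * ∑ i,
      (Real.log (1 + a * Real.exp ((∑ j, x i j * γ j) + ∑ j, x i j * Δ j))
       - Real.log (1 + a * Real.exp (∑ j, x i j * γ j))
       - (∑ j, x i j * Δ j) * Gfun a (∑ j, x i j * γ j)) := by
  unfold deltaEll ellN gradEllN
  have h1 : ∀ i, ∑ j, x i j * (γ + Δ) j = (∑ j, x i j * γ j) + ∑ j, x i j * Δ j := by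
    intro i
    simp [Pi.add_apply, mul_add, Finset.sum_add_distrib]
  simp_rw [h1, logistic_add_log ha]
  have hswap : ∑ j, Δ j * (-(N : ℝ)⁻¹ * ∑ i, (R i - Gfun a (∑ k, x i k * γ k)) * x i j)
      = ∑ i, (-(N : ℝ)⁻¹ * ((R i - Gfun a (∑ k, x i k * γ k)) * ∑ j, x i j * Δ j)) := by
    simp_rw [Finset.mul_sum]
    rw [Finset.sum_comm]
    apply Finset.sum_congr rfl
    intro i _
    apply Finset.sum_congr rfl
    intro j _
    ring
  rw [hswap, Finset.mul_sum, Finset.mul_sum, Finset.mul_sum]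
  rw [← Finset.sum_sub_distrib, ← Finset.sum_sub_distrib]
  apply Finset.sum_congr rfl
  intro i _
  ring

/-- Restricted strong convexity transfers under offset reweighting: for all `Δ` and all
`a ∈ (0,1]`, `δℓ(Δ; a; γ₀) ≥ a·δℓ(Δ; 1; γ₀)`; consequently the RSC property with parameter `κ`
on a set `A` for `a = 1` implies the RSC property with parameter `a·κ` on `A`. -/
theorem deltaEll_offset_RSC_transfer {N d : ℕ} (R : Fin N → ℝ) (x : Fin N → Fin d → ℝ)
    (γ₀ : Fin d → ℝ) :
    (∀ a : ℝ, a ∈ Set.Ioc (0 : ℝ) 1 → ∀ Δ : Fin d → ℝ,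
      a * deltaEll R x Δ 1 γ₀ ≤ deltaEll R x Δ a γ₀) ∧
    (∀ a : ℝ, a ∈ Set.Ioc (0 : ℝ) 1 → ∀ (A : Set (Fin d → ℝ)) (κ : ℝ),
      (∀ Δ ∈ A, κ * ∑ j, (Δ j) ^ 2 ≤ deltaEll R x Δ 1 γ₀) →
      ∀ Δ ∈ A, a * κ * ∑ j, (Δ j) ^ 2 ≤ deltaEll R x Δ a γ₀) := by
  have main : ∀ a : ℝ, a ∈ Set.Ioc (0 : ℝ) 1 → ∀ Δ : Fin d → ℝ,
      a * deltaEll R x Δ 1 γ₀ ≤ deltaEll R x Δ a γ₀ := by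
    rintro a ⟨ha0, ha1⟩ Δ
    rw [deltaEll_eq R x Δ γ₀ ha0, deltaEll_eq R x Δ γ₀ one_pos]
    rw [← mul_assoc, mul_comm a, mul_assoc, Finset.mul_sum]
    rw [Finset.mul_sum, Finset.mul_sum]
    apply Finset.sum_le_sum
    intro i _
    have h := key_ineq_s11 ha0 ha1 (∑ j, x i j * γ₀ j) (∑ j, x i j * Δ j)
    have hN : (0:ℝ) ≤ (N : ℝ)⁻¹ := by positivity
    have := mul_le_mul_of_nonneg_left h hN
    simp only [one_mul] at this ⊢
    linarith [this]
  refine ⟨main, ?_⟩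
  rintro a ha A κ hRSC Δ hΔ
  calc a * κ * ∑ j, (Δ j) ^ 2 = a * (κ * ∑ j, (Δ j) ^ 2) := by ring
    _ ≤ a * deltaEll R x Δ 1 γ₀ := mul_le_mul_of_nonneg_left (hRSC Δ hΔ) ha.1.le
    _ ≤ deltaEll R x Δ a γ₀ := main a ha Δ
end

section
/- Suppose R ⟂ Y | X, π(X) = E[R|X] ∈ (0,1) a.s., m(X) = E[Y|X], and E[(Y − m(X))² | X] ≥ σ₁² > 0, E[(Y − μ(X))² | X] ≤ σ₂², Var(Y) ≤ σ₂² for a fixed function μ. Let ψ(Z) = μ(X) − θ₀ + (R/π(X))(Y − μ(X)) with θ₀ = E[Y] and a^{−1} = E[1/π(X)]. Then σ₁² ≤ a·Var(ψ(Z)) ≤ σ₂², i.e., Var(ψ(Z)) ≍ a^{−1}. -/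
open MeasureTheory ProbabilityTheory
open scoped ENNReal NNReal

set_option linter.unusedSectionVars false
set_option maxHeartbeats 1000000

section Aux

variable {Ω : Type*} [mΩ : MeasurableSpace Ω] [StandardBorelSpace Ω]
  {μ : Measure Ω} [IsProbabilityMeasure μ]

lemma integrable_mul_of_memL2 {f g : Ω → ℝ} (hf : MemLp f 2 μ) (hg : MemLp g 2 μ) :
    Integrable (fun ω => f ω * g ω) μ := by
  have h : (1 : ℝ≥0∞) / 1 = 1 / 2 + 1 / 2 := by
    rw [ENNReal.div_add_div_same, div_one, one_add_one_eq_two,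
      ENNReal.div_self (by norm_num) (by norm_num)]
  have h2 := memLp_one_iff_integrable.mp (hf.smul (φ := g) (r := 1) hg)
  have : (g • f) = fun ω => f ω * g ω := by
    funext ω; simp [Pi.smul_apply', smul_eq_mul, mul_comm]
  rwa [this] at h2

/-- Master product rule: conditional independence of `R` and `Y` given `σ(X)` implies
`E[R · G(X,Y) | σ(X)] = E[R | σ(X)] · E[G(X,Y) | σ(X)]` for binary `R`. -/
lemma condExp_R_mul_of_condIndep {p : ℕ} {X : Ω → Fin p → ℝ} (hX : Measurable X)
    {R : Ω → ℝ} (hR : Measurable R) (hRbin : ∀ ω, R ω = 0 ∨ R ω = 1)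
    {Y : Ω → ℝ} (hY : Measurable Y)
    {mX : MeasurableSpace Ω} (hmXdef : mX = MeasurableSpace.comap X inferInstance)
    (hmX : mX ≤ mΩ) (hCI : CondIndepFun mX hmX R Y μ)
    {G : (Fin p → ℝ) × ℝ → ℝ} (hG : Measurable G)
    (hGint : Integrable (fun ω => G (X ω, Y ω)) μ) :
    (μ[fun ω => R ω * G (X ω, Y ω)|mX]) =ᵐ[μ]
      fun ω => (μ[R|mX]) ω * (μ[fun ω' => G (X ω', Y ω')|mX]) ω := by
  letI : MeasurableSpace Ω := mΩ
  haveI : SigmaFinite (μ.trim hmX) := by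
    have := isFiniteMeasure_trim (μ := μ) hmX
    infer_instance
  have hR01 : ∀ ω, 0 ≤ R ω ∧ R ω ≤ 1 := by
    intro ω; rcases hRbin ω with h | h <;> simp [h]
  have hRbd : ∀ᵐ ω ∂μ, ‖R ω‖ ≤ 1 := by
    refine Filter.Eventually.of_forall fun ω => ?_
    rw [Real.norm_eq_abs, abs_le]
    exact ⟨by linarith [(hR01 ω).1], (hR01 ω).2⟩
  have hRint : Integrable R μ :=
    (integrable_const (1 : ℝ)).mono' hR.aestronglyMeasurable hRbd
  have hπ0 : 0 ≤ᵐ[μ] (μ[R|mX]) := condExp_nonneg (Filter.Eventually.of_forall fun ω => (hR01 ω).1)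
  have hπ1 : (μ[R|mX]) ≤ᵐ[μ] fun _ => (1 : ℝ) := by
    have h := condExp_mono (μ := μ) (m := mX) hRint (integrable_const (1 : ℝ))
      (Filter.Eventually.of_forall fun ω => (hR01 ω).2)
    calc (μ[R|mX]) ≤ᵐ[μ] μ[(fun _ => (1:ℝ))|mX] := h
    _ = fun _ => (1:ℝ) := condExp_const hmX 1
  have hπbd : ∀ᵐ ω ∂μ, ‖(μ[R|mX]) ω‖ ≤ 1 := by
    filter_upwards [hπ0, hπ1] with ω h0 h1
    simp only [Pi.zero_apply] at h0
    rw [Real.norm_eq_abs, abs_le]; exact ⟨by linarith, h1⟩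
  have hπint : Integrable (μ[R|mX]) μ := integrable_condExp
  have hπmeas : Measurable[mΩ] (μ[R|mX]) := (stronglyMeasurable_condExp.mono hmX).measurable
  -- the key rectangle identity
  have keyA : ∀ v : Set ℝ, MeasurableSet v → ∀ s : Set Ω, MeasurableSet[mX] s →
      ∫ ω in Y ⁻¹' v ∩ s, R ω ∂μ = ∫ ω in Y ⁻¹' v ∩ s, (μ[R|mX]) ω ∂μ := by
    intro v hv s hs
    have hsΩ : MeasurableSet[mΩ] s := hmX s hs
    have hvΩ : MeasurableSet[mΩ] (Y ⁻¹' v) := hY hv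
    have hAΩ : MeasurableSet[mΩ] (R ⁻¹' {1}) := hR (measurableSet_singleton 1)
    have hRfun : R = (R ⁻¹' {1}).indicator (fun _ => (1 : ℝ)) := by
      funext ω
      rcases hRbin ω with h | h
      · have hω : ω ∉ R ⁻¹' {1} := by simp [Set.mem_preimage, h]
        simp [Set.indicator_of_notMem hω, h]
      · have hω : ω ∈ R ⁻¹' {1} := by simp [Set.mem_preimage, h]
        simp [Set.indicator_of_mem hω, h]
    have hprod := (condIndepFun_iff_condExp_inter_preimage_eq_mul (hm' := hmX)
      hR hY).mp hCI {1} v (measurableSet_singleton 1) hv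
    rw [← hRfun] at hprod
    have hindInt : Integrable ((R ⁻¹' {1} ∩ Y ⁻¹' v).indicator (fun _ => (1:ℝ))) μ :=
      (integrable_const (1:ℝ)).indicator (hAΩ.inter hvΩ)
    have hindBInt : Integrable ((Y ⁻¹' v).indicator (fun _ => (1:ℝ))) μ :=
      (integrable_const (1:ℝ)).indicator hvΩ
    have hmul : Integrable (fun ω => (μ[R|mX]) ω *
        (Y ⁻¹' v).indicator (fun _ => (1:ℝ)) ω) μ :=
      hindBInt.bdd_mul (c := 1) hπint.aestronglyMeasurable hπbd
    have hpull : (μ[(fun ω => (μ[R|mX]) ω * (Y ⁻¹' v).indicator (fun _ => (1:ℝ)) ω)|mX]) =ᵐ[μ]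
        fun ω => (μ[R|mX]) ω * (μ[(Y ⁻¹' v).indicator (fun _ => (1:ℝ))|mX]) ω :=
      condExp_mul_of_stronglyMeasurable_left stronglyMeasurable_condExp hmul hindBInt
    calc ∫ ω in Y ⁻¹' v ∩ s, R ω ∂μ
        = ∫ ω in s ∩ Y ⁻¹' v, R ω ∂μ := by rw [Set.inter_comm]
      _ = ∫ ω in s, (Y ⁻¹' v).indicator R ω ∂μ := (setIntegral_indicator hvΩ).symm
      _ = ∫ ω in s, (R ⁻¹' {1} ∩ Y ⁻¹' v).indicator (fun _ => (1:ℝ)) ω ∂μ := by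
          refine setIntegral_congr_ae hsΩ (Filter.Eventually.of_forall fun ω _ => ?_)
          by_cases hωv : ω ∈ Y ⁻¹' v
          · rcases hRbin ω with h | h
            · have hni : ω ∉ R ⁻¹' {1} ∩ Y ⁻¹' v := by
                rintro ⟨h1, -⟩; simp [Set.mem_preimage, h] at h1
              simp [Set.indicator_of_mem hωv, Set.indicator_of_notMem hni, h]
            · have hmem : ω ∈ R ⁻¹' {1} ∩ Y ⁻¹' v := ⟨by simp [Set.mem_preimage, h], hωv⟩
              simp [Set.indicator_of_mem hωv, Set.indicator_of_mem hmem, h]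
          · have hni : ω ∉ R ⁻¹' {1} ∩ Y ⁻¹' v := fun h => hωv h.2
            simp [Set.indicator_of_notMem hωv, Set.indicator_of_notMem hni]
      _ = ∫ ω in s, (μ[(R ⁻¹' {1} ∩ Y ⁻¹' v).indicator (fun _ => (1:ℝ))|mX]) ω ∂μ :=
          (setIntegral_condExp hmX hindInt hs).symm
      _ = ∫ ω in s, (μ[R|mX]) ω * (μ[(Y ⁻¹' v).indicator (fun _ => (1:ℝ))|mX]) ω ∂μ :=
          setIntegral_congr_ae hsΩ (hprod.mono fun ω hω _ => hω)
      _ = ∫ ω in s, (μ[(fun ω => (μ[R|mX]) ω *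
            (Y ⁻¹' v).indicator (fun _ => (1:ℝ)) ω)|mX]) ω ∂μ :=
          (setIntegral_congr_ae hsΩ (hpull.mono fun ω hω _ => hω)).symm
      _ = ∫ ω in s, (μ[R|mX]) ω * (Y ⁻¹' v).indicator (fun _ => (1:ℝ)) ω ∂μ :=
          setIntegral_condExp hmX hmul hs
      _ = ∫ ω in s, (Y ⁻¹' v).indicator (μ[R|mX]) ω ∂μ := by
          refine setIntegral_congr_ae hsΩ (Filter.Eventually.of_forall fun ω _ => ?_)
          by_cases h : ω ∈ Y ⁻¹' v <;> simp [Set.indicator, h]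
      _ = ∫ ω in s ∩ Y ⁻¹' v, (μ[R|mX]) ω ∂μ := setIntegral_indicator hvΩ
      _ = ∫ ω in Y ⁻¹' v ∩ s, (μ[R|mX]) ω ∂μ := by rw [Set.inter_comm]
  have hXY : Measurable[mΩ] fun ω => (X ω, Y ω) := hX.prodMk hY
  have transfer : ∀ d : Ω → ℝ, Measurable[mΩ] d → (0 ≤ᵐ[μ] d) →
      ∀ s : Set Ω, MeasurableSet[mΩ] s →
      ∫ z, G z ∂(Measure.map (fun ω => (X ω, Y ω))
          ((μ.restrict s).withDensity (fun ω => ENNReal.ofReal (d ω))))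
        = ∫ ω in s, d ω * G (X ω, Y ω) ∂μ := by
    intro d hd hd0 s hs
    rw [integral_map hXY.aemeasurable hG.aestronglyMeasurable]
    have hofReal : (fun ω => ENNReal.ofReal (d ω)) =
        fun ω => ((Real.toNNReal (d ω) : ℝ≥0) : ℝ≥0∞) := rfl
    rw [hofReal, integral_withDensity_eq_integral_smul
      (f := fun ω => Real.toNNReal (d ω)) (measurable_real_toNNReal.comp hd)
      (fun ω => G (X ω, Y ω))]
    refine integral_congr_ae ?_
    filter_upwards [ae_restrict_of_ae hd0] with ω h0
    simp only [Pi.zero_apply] at h0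
    simp only [NNReal.smul_def, Real.coe_toNNReal _ h0, smul_eq_mul]
  have keyB : ∀ s : Set Ω, MeasurableSet[mX] s →
      Measure.map (fun ω => (X ω, Y ω)) ((μ.restrict s).withDensity
          (fun ω => ENNReal.ofReal (R ω)))
        = Measure.map (fun ω => (X ω, Y ω)) ((μ.restrict s).withDensity
          (fun ω => ENNReal.ofReal ((μ[R|mX]) ω))) := by
    intro s hs
    have hsΩ : MeasurableSet[mΩ] s := hmX s hs
    have rect : ∀ (u : Set (Fin p → ℝ)) (v : Set ℝ), MeasurableSet u → MeasurableSet v →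
        (Measure.map (fun ω => (X ω, Y ω)) ((μ.restrict s).withDensity
          (fun ω => ENNReal.ofReal (R ω)))) (u ×ˢ v)
        = (Measure.map (fun ω => (X ω, Y ω)) ((μ.restrict s).withDensity
          (fun ω => ENNReal.ofReal ((μ[R|mX]) ω)))) (u ×ˢ v) := by
      intro u v hu hv
      have huv : MeasurableSet (u ×ˢ v) := hu.prod hv
      have hpre : (fun ω => (X ω, Y ω)) ⁻¹' (u ×ˢ v) = X ⁻¹' u ∩ Y ⁻¹' v :=
        Set.mk_preimage_prod X Y
      have hXu : MeasurableSet[mX] (X ⁻¹' u) := by rw [hmXdef]; exact ⟨u, hu, rfl⟩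
      have hE : MeasurableSet[mΩ] (X ⁻¹' u ∩ Y ⁻¹' v) := (hX hu).inter (hY hv)
      have hEq : (X ⁻¹' u ∩ Y ⁻¹' v) ∩ s = Y ⁻¹' v ∩ (X ⁻¹' u ∩ s) := by
        ext ω; simp only [Set.mem_inter_iff]; tauto
      rw [Measure.map_apply hXY huv, Measure.map_apply hXY huv, hpre,
        withDensity_apply _ hE, withDensity_apply _ hE,
        Measure.restrict_restrict hE, hEq]
      have h1 : ∫⁻ ω in Y ⁻¹' v ∩ (X ⁻¹' u ∩ s), ENNReal.ofReal (R ω) ∂μ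
          = ENNReal.ofReal (∫ ω in Y ⁻¹' v ∩ (X ⁻¹' u ∩ s), R ω ∂μ) :=
        (ofReal_integral_eq_lintegral_ofReal hRint.integrableOn
          (ae_restrict_of_ae (Filter.Eventually.of_forall fun ω => (hR01 ω).1))).symm
      have h2 : ∫⁻ ω in Y ⁻¹' v ∩ (X ⁻¹' u ∩ s), ENNReal.ofReal ((μ[R|mX]) ω) ∂μ
          = ENNReal.ofReal (∫ ω in Y ⁻¹' v ∩ (X ⁻¹' u ∩ s), (μ[R|mX]) ω ∂μ) :=
        (ofReal_integral_eq_lintegral_ofReal hπint.integrableOn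
          (ae_restrict_of_ae hπ0)).symm
      rw [h1, h2, keyA v hv _ (hXu.inter hs)]
    haveI hfin1 : IsFiniteMeasure ((μ.restrict s).withDensity
        (fun ω => ENNReal.ofReal (R ω))) := by
      refine isFiniteMeasure_withDensity ?_
      have hb : ∫⁻ ω in s, ENNReal.ofReal (R ω) ∂μ ≤ ∫⁻ _ in s, 1 ∂μ :=
        lintegral_mono fun ω => ENNReal.ofReal_le_one.mpr (hR01 ω).2
      rw [setLIntegral_one] at hb
      exact ne_of_lt (lt_of_le_of_lt hb (measure_lt_top μ s))
    haveI hfin2 : IsFiniteMeasure ((μ.restrict s).withDensity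
        (fun ω => ENNReal.ofReal ((μ[R|mX]) ω))) := by
      refine isFiniteMeasure_withDensity ?_
      have hb : ∫⁻ ω in s, ENNReal.ofReal ((μ[R|mX]) ω) ∂μ ≤ ∫⁻ _ in s, 1 ∂μ := by
        refine lintegral_mono_ae ?_
        filter_upwards [ae_restrict_of_ae hπ1] with ω h1
        exact ENNReal.ofReal_le_one.mpr h1
      rw [setLIntegral_one] at hb
      exact ne_of_lt (lt_of_le_of_lt hb (measure_lt_top μ s))
    haveI := Measure.isFiniteMeasure_map ((μ.restrict s).withDensity
        (fun ω => ENNReal.ofReal (R ω))) (fun ω => (X ω, Y ω))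
    refine ext_of_generate_finite _ generateFrom_prod.symm isPiSystem_prod ?_ ?_
    · rintro _ ⟨u, hu, v, hv, rfl⟩
      exact rect u v hu hv
    · have h := rect Set.univ Set.univ MeasurableSet.univ MeasurableSet.univ
      simpa [Set.univ_prod_univ] using h
  have keyC : ∀ s : Set Ω, MeasurableSet[mX] s →
      ∫ ω in s, R ω * G (X ω, Y ω) ∂μ = ∫ ω in s, (μ[R|mX]) ω * G (X ω, Y ω) ∂μ := by
    intro s hs
    have hsΩ : MeasurableSet[mΩ] s := hmX s hs
    rw [← transfer R hR (Filter.Eventually.of_forall fun ω => (hR01 ω).1) s hsΩ,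
      ← transfer _ hπmeas hπ0 s hsΩ, keyB s hs]
  have hfint : Integrable (fun ω => R ω * G (X ω, Y ω)) μ :=
    hGint.bdd_mul (c := 1) hR.aestronglyMeasurable hRbd
  have hgint : Integrable (fun ω => (μ[R|mX]) ω * G (X ω, Y ω)) μ :=
    hGint.bdd_mul (c := 1) hπint.aestronglyMeasurable hπbd
  have hceint : Integrable (fun ω => (μ[R|mX]) ω * (μ[fun ω' => G (X ω', Y ω')|mX]) ω) μ :=
    (integrable_condExp (f := fun ω' => G (X ω', Y ω'))).bdd_mul (c := 1)
      hπint.aestronglyMeasurable hπbd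
  have hpull : (μ[(fun ω => (μ[R|mX]) ω * G (X ω, Y ω))|mX]) =ᵐ[μ]
      fun ω => (μ[R|mX]) ω * (μ[fun ω' => G (X ω', Y ω')|mX]) ω :=
    condExp_mul_of_stronglyMeasurable_left stronglyMeasurable_condExp hgint hGint
  refine (ae_eq_condExp_of_forall_setIntegral_eq hmX hfint
    (fun s _ _ => hceint.integrableOn) (fun s hs _ => ?_)
    ((stronglyMeasurable_condExp.mul stronglyMeasurable_condExp).aestronglyMeasurable)).symm
  calc ∫ ω in s, (μ[R|mX]) ω * (μ[fun ω' => G (X ω', Y ω')|mX]) ω ∂μ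
      = ∫ ω in s, (μ[(fun ω => (μ[R|mX]) ω * G (X ω, Y ω))|mX]) ω ∂μ :=
        (setIntegral_congr_ae (hmX s hs) (hpull.mono fun ω hω _ => hω)).symm
    _ = ∫ ω in s, (μ[R|mX]) ω * G (X ω, Y ω) ∂μ := setIntegral_condExp hmX hgint hs
    _ = ∫ ω in s, R ω * G (X ω, Y ω) ∂μ := (keyC s hs).symm

end Aux

/-- Order of the variance of the doubly robust influence function: under ignorability,
with `π(X) = E[R|σ(X)] ∈ (0,1)` a.s., conditional-variance bounds
`σ₁² ≤ E[(Y−m(X))²|X]`, `E[(Y−μf(X))²|X] ≤ σ₂²`, `Var(Y) ≤ σ₂²`, and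
`a⁻¹ = E[1/π(X)]`, the influence function
`ψ(Z) = μf(X) − θ₀ + (R/π(X))(Y − μf(X))` satisfies `σ₁² ≤ a·Var(ψ) ≤ σ₂²`. -/
theorem variance_order_of_IF {Ω : Type*} [mΩ : MeasurableSpace Ω]
    [StandardBorelSpace Ω] (μ : Measure Ω) [IsProbabilityMeasure μ] {p : ℕ}
    (X : Ω → Fin p → ℝ) (hX : Measurable X) (R : Ω → ℝ) (hR : Measurable R)
    (hRbin : ∀ ω, R ω = 0 ∨ R ω = 1) (Y : Ω → ℝ) (hY : Measurable Y)
    (hY2 : MemLp Y 2 μ)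
    (mX : MeasurableSpace Ω) (hmXdef : mX = MeasurableSpace.comap X inferInstance)
    (hmX : mX ≤ mΩ)
    (hCI : CondIndepFun mX hmX R Y μ)
    (hπ : ∀ᵐ ω ∂μ, (μ[R | mX]) ω ∈ Set.Ioo (0 : ℝ) 1)
    (hπinv : Integrable (fun ω => ((μ[R | mX]) ω)⁻¹) μ)
    (μf : (Fin p → ℝ) → ℝ) (hμf : Measurable μf)
    (hμf2 : MemLp (fun ω => μf (X ω)) 2 μ)
    (σ₁ σ₂ : ℝ) (hσ₁ : 0 < σ₁)
    (hlow : ∀ᵐ ω ∂μ,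
      σ₁ ^ 2 ≤ (μ[(fun ω' => (Y ω' - (μ[Y | mX]) ω') ^ 2) | mX]) ω)
    (hup : ∀ᵐ ω ∂μ,
      (μ[(fun ω' => (Y ω' - μf (X ω')) ^ 2) | mX]) ω ≤ σ₂ ^ 2)
    (hVarY : variance Y μ ≤ σ₂ ^ 2)
    (a θ₀ : ℝ) (ha : a = (∫ ω, ((μ[R | mX]) ω)⁻¹ ∂μ)⁻¹) (hθ₀ : θ₀ = ∫ ω, Y ω ∂μ)
    (ψ : Ω → ℝ)
    (hψ : ψ = fun ω => μf (X ω) - θ₀ + (R ω / (μ[R | mX]) ω) * (Y ω - μf (X ω)))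
    (hψ2 : MemLp ψ 2 μ) :
    σ₁ ^ 2 ≤ a * variance ψ μ ∧ a * variance ψ μ ≤ σ₂ ^ 2 := by
  letI : MeasurableSpace Ω := mΩ
  haveI : SigmaFinite (μ.trim hmX) := by
    have := isFiniteMeasure_trim (μ := μ) hmX
    infer_instance
  have hR01 : ∀ ω, 0 ≤ R ω ∧ R ω ≤ 1 := by
    intro ω; rcases hRbin ω with h | h <;> simp [h]
  have hR2 : ∀ ω, R ω ^ 2 = R ω := by
    intro ω; rcases hRbin ω with h | h <;> simp [h]
  have hRbd : ∀ᵐ ω ∂μ, ‖R ω‖ ≤ 1 := by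
    refine Filter.Eventually.of_forall fun ω => ?_
    rw [Real.norm_eq_abs, abs_le]
    exact ⟨by linarith [(hR01 ω).1], (hR01 ω).2⟩
  -- basic integrability
  have intY : Integrable Y μ := hY2.integrable one_le_two
  have intY2 : Integrable (fun ω => Y ω ^ 2) μ := hY2.integrable_sq
  have hμfXint : Integrable (fun ω => μf (X ω)) μ := hμf2.integrable one_le_two
  have hS2 : MemLp (fun ω => Y ω - θ₀) 2 μ := hY2.sub (memLp_const θ₀)
  have hT2 : MemLp (fun ω => Y ω - μf (X ω)) 2 μ := hY2.sub hμf2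
  have intS : Integrable (fun ω => Y ω - θ₀) μ := hS2.integrable one_le_two
  have intT : Integrable (fun ω => Y ω - μf (X ω)) μ := hT2.integrable one_le_two
  have intS2 : Integrable (fun ω => (Y ω - θ₀) ^ 2) μ := hS2.integrable_sq
  have intT2 : Integrable (fun ω => (Y ω - μf (X ω)) ^ 2) μ := hT2.integrable_sq
  have intST : Integrable (fun ω => (Y ω - θ₀) * (Y ω - μf (X ω))) μ :=
    integrable_mul_of_memL2 hS2 hT2
  -- measurability with respect to mX
  have hXmX : Measurable[mX] X := by
    rw [hmXdef]; exact measurable_iff_comap_le.mpr le_rfl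
  have hμfXSM : StronglyMeasurable[mX] (fun ω => μf (X ω)) :=
    (hμf.comp hXmX).stronglyMeasurable
  have hπmble : Measurable[mX] (μ[R|mX]) := stronglyMeasurable_condExp.measurable
  have hπinvSM : StronglyMeasurable[mX] (fun ω => ((μ[R|mX]) ω)⁻¹) :=
    hπmble.inv.stronglyMeasurable
  -- U and V
  have hUdef : ∀ ω, (R ω / (μ[R|mX]) ω - 1) * (Y ω - μf (X ω))
      = ((μ[R|mX]) ω)⁻¹ * (R ω * (Y ω - μf (X ω))) - (Y ω - μf (X ω)) := by
    intro ω; rw [div_eq_mul_inv]; ring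
  have hU2 : MemLp (fun ω => (R ω / (μ[R|mX]) ω - 1) * (Y ω - μf (X ω))) 2 μ := by
    refine (hψ2.sub hS2).ae_eq (Filter.Eventually.of_forall fun ω => ?_)
    simp only [Pi.sub_apply, hψ]
    rw [div_eq_mul_inv]; ring
  have hV2 : MemLp (fun ω => ((μ[R|mX]) ω)⁻¹ * (R ω * (Y ω - μf (X ω)))) 2 μ := by
    refine (hψ2.sub (hμf2.sub (memLp_const θ₀))).ae_eq
      (Filter.Eventually.of_forall fun ω => ?_)
    simp only [Pi.sub_apply, hψ]
    rw [div_eq_mul_inv]; ring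
  have intU : Integrable (fun ω => (R ω / (μ[R|mX]) ω - 1) * (Y ω - μf (X ω))) μ :=
    hU2.integrable one_le_two
  have intU2 : Integrable (fun ω => ((R ω / (μ[R|mX]) ω - 1) * (Y ω - μf (X ω))) ^ 2) μ :=
    hU2.integrable_sq
  have intSU : Integrable (fun ω =>
      (Y ω - θ₀) * ((R ω / (μ[R|mX]) ω - 1) * (Y ω - μf (X ω)))) μ :=
    integrable_mul_of_memL2 hS2 hU2
  have intV : Integrable (fun ω => ((μ[R|mX]) ω)⁻¹ * (R ω * (Y ω - μf (X ω)))) μ :=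
    hV2.integrable one_le_two
  have intRT : Integrable (fun ω => R ω * (Y ω - μf (X ω))) μ :=
    intT.bdd_mul (c := 1) hR.aestronglyMeasurable hRbd
  have intRT2 : Integrable (fun ω => R ω * (Y ω - μf (X ω)) ^ 2) μ :=
    intT2.bdd_mul (c := 1) hR.aestronglyMeasurable hRbd
  have intRST : Integrable (fun ω => R ω * ((Y ω - θ₀) * (Y ω - μf (X ω)))) μ :=
    intST.bdd_mul (c := 1) hR.aestronglyMeasurable hRbd
  -- master product rule instances
  have hM1 : (μ[fun ω => R ω * (Y ω - μf (X ω))|mX]) =ᵐ[μ]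
      fun ω => (μ[R|mX]) ω * (μ[fun ω' => Y ω' - μf (X ω')|mX]) ω :=
    condExp_R_mul_of_condIndep hX hR hRbin hY hmXdef hmX hCI
      (G := fun z => z.2 - μf z.1) (measurable_snd.sub (hμf.comp measurable_fst)) intT
  have hM2 : (μ[fun ω => R ω * (Y ω - μf (X ω)) ^ 2|mX]) =ᵐ[μ]
      fun ω => (μ[R|mX]) ω * (μ[fun ω' => (Y ω' - μf (X ω')) ^ 2|mX]) ω :=
    condExp_R_mul_of_condIndep hX hR hRbin hY hmXdef hmX hCI
      (G := fun z => (z.2 - μf z.1) ^ 2)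
      ((measurable_snd.sub (hμf.comp measurable_fst)).pow_const 2) intT2
  have hM3 : (μ[fun ω => R ω * ((Y ω - θ₀) * (Y ω - μf (X ω)))|mX]) =ᵐ[μ]
      fun ω => (μ[R|mX]) ω * (μ[fun ω' => (Y ω' - θ₀) * (Y ω' - μf (X ω'))|mX]) ω :=
    condExp_R_mul_of_condIndep hX hR hRbin hY hmXdef hmX hCI
      (G := fun z => (z.2 - θ₀) * (z.2 - μf z.1))
      ((measurable_snd.sub measurable_const).mul
        (measurable_snd.sub (hμf.comp measurable_fst))) intST
  -- conditional expectation of U is zero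
  have hpullV : (μ[(fun ω => ((μ[R|mX]) ω)⁻¹ * (R ω * (Y ω - μf (X ω))))|mX]) =ᵐ[μ]
      fun ω => ((μ[R|mX]) ω)⁻¹ * (μ[fun ω' => R ω' * (Y ω' - μf (X ω'))|mX]) ω :=
    condExp_mul_of_stronglyMeasurable_left hπinvSM intV intRT
  have hUce : (μ[fun ω => (R ω / (μ[R|mX]) ω - 1) * (Y ω - μf (X ω))|mX]) =ᵐ[μ]
      fun _ => (0 : ℝ) := by
    have hUd : (fun ω => (R ω / (μ[R|mX]) ω - 1) * (Y ω - μf (X ω)))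
        = (fun ω => ((μ[R|mX]) ω)⁻¹ * (R ω * (Y ω - μf (X ω))))
          - (fun ω => Y ω - μf (X ω)) := by
      funext ω; simp only [Pi.sub_apply]; exact hUdef ω
    rw [hUd]
    have hsub := condExp_sub (μ := μ) (m := mX) intV intT
    refine hsub.trans ?_
    filter_upwards [hpullV, hM1, hπ] with ω h1 h2 h3
    simp only [Pi.sub_apply, h1, h2]
    rw [inv_mul_cancel_left₀ (ne_of_gt h3.1), sub_self]
  -- conditional expectation of S*U is zero
  have hSUce : (μ[fun ω => (Y ω - θ₀) *
      ((R ω / (μ[R|mX]) ω - 1) * (Y ω - μf (X ω)))|mX]) =ᵐ[μ] fun _ => (0 : ℝ) := by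
    have intpRST : Integrable (fun ω =>
        ((μ[R|mX]) ω)⁻¹ * (R ω * ((Y ω - θ₀) * (Y ω - μf (X ω))))) μ := by
      refine (integrable_mul_of_memL2 hS2 hV2).congr
        (Filter.Eventually.of_forall fun ω => ?_)
      ring
    have hd : (fun ω => (Y ω - θ₀) * ((R ω / (μ[R|mX]) ω - 1) * (Y ω - μf (X ω))))
        = (fun ω => ((μ[R|mX]) ω)⁻¹ * (R ω * ((Y ω - θ₀) * (Y ω - μf (X ω)))))
          - (fun ω => (Y ω - θ₀) * (Y ω - μf (X ω))) := by
      funext ω; simp only [Pi.sub_apply]; rw [div_eq_mul_inv]; ring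
    rw [hd]
    have hsub := condExp_sub (μ := μ) (m := mX) intpRST intST
    refine hsub.trans ?_
    have hpull2 : (μ[(fun ω =>
        ((μ[R|mX]) ω)⁻¹ * (R ω * ((Y ω - θ₀) * (Y ω - μf (X ω)))))|mX]) =ᵐ[μ]
        fun ω => ((μ[R|mX]) ω)⁻¹ *
          (μ[fun ω' => R ω' * ((Y ω' - θ₀) * (Y ω' - μf (X ω')))|mX]) ω :=
      condExp_mul_of_stronglyMeasurable_left hπinvSM intpRST intRST
    filter_upwards [hpull2, hM3, hπ] with ω h1 h2 h3
    simp only [Pi.sub_apply, h1, h2]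
    rw [inv_mul_cancel_left₀ (ne_of_gt h3.1), sub_self]
  -- conditional expectation of U^2
  have hU2ce : (μ[fun ω => ((R ω / (μ[R|mX]) ω - 1) * (Y ω - μf (X ω))) ^ 2|mX]) =ᵐ[μ]
      fun ω => (((μ[R|mX]) ω)⁻¹ - 1) *
        (μ[fun ω' => (Y ω' - μf (X ω')) ^ 2|mX]) ω := by
    have hcSM : StronglyMeasurable[mX]
        (fun ω => (((μ[R|mX]) ω)⁻¹) ^ 2 - 2 * ((μ[R|mX]) ω)⁻¹) :=
      ((hπmble.inv.pow_const 2).sub (hπmble.inv.const_mul 2)).stronglyMeasurable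
    have hptwise : ∀ ω, ((R ω / (μ[R|mX]) ω - 1) * (Y ω - μf (X ω))) ^ 2
        = ((((μ[R|mX]) ω)⁻¹) ^ 2 - 2 * ((μ[R|mX]) ω)⁻¹) *
            (R ω * (Y ω - μf (X ω)) ^ 2) + (Y ω - μf (X ω)) ^ 2 := by
      intro ω
      rw [div_eq_mul_inv]
      linear_combination ((((μ[R|mX]) ω)⁻¹) ^ 2 * (Y ω - μf (X ω)) ^ 2) * hR2 ω
    have intcRT2 : Integrable (fun ω =>
        ((((μ[R|mX]) ω)⁻¹) ^ 2 - 2 * ((μ[R|mX]) ω)⁻¹) *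
          (R ω * (Y ω - μf (X ω)) ^ 2)) μ := by
      refine (intU2.sub intT2).congr (Filter.Eventually.of_forall fun ω => ?_)
      simp only [Pi.sub_apply]
      linear_combination (hptwise ω)
    have hd : (fun ω => ((R ω / (μ[R|mX]) ω - 1) * (Y ω - μf (X ω))) ^ 2)
        = (fun ω => ((((μ[R|mX]) ω)⁻¹) ^ 2 - 2 * ((μ[R|mX]) ω)⁻¹) *
            (R ω * (Y ω - μf (X ω)) ^ 2)) + (fun ω => (Y ω - μf (X ω)) ^ 2) := by
      funext ω; simp only [Pi.add_apply]; exact hptwise ω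
    rw [hd]
    have hadd := condExp_add (μ := μ) (m := mX) intcRT2 intT2
    refine hadd.trans ?_
    have hpull3 : (μ[(fun ω => ((((μ[R|mX]) ω)⁻¹) ^ 2 - 2 * ((μ[R|mX]) ω)⁻¹) *
        (R ω * (Y ω - μf (X ω)) ^ 2))|mX]) =ᵐ[μ]
        fun ω => ((((μ[R|mX]) ω)⁻¹) ^ 2 - 2 * ((μ[R|mX]) ω)⁻¹) *
          (μ[fun ω' => R ω' * (Y ω' - μf (X ω')) ^ 2|mX]) ω :=
      condExp_mul_of_stronglyMeasurable_left hcSM intcRT2 intRT2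
    filter_upwards [hpull3, hM2, hπ] with ω h1 h2 h3
    simp only [Pi.add_apply, h1, h2]
    have hne : (μ[R|mX]) ω ≠ 0 := ne_of_gt h3.1
    field_simp
    ring
  -- m := μ[Y|mX] is in L²
  have hmSM : StronglyMeasurable[mX] (μ[Y|mX]) := stronglyMeasurable_condExp
  have hmAESM : AEStronglyMeasurable (μ[Y|mX]) μ :=
    (hmSM.mono hmX).aestronglyMeasurable
  have hq2int : Integrable (μ[fun ω => Y ω ^ 2|mX]) μ := integrable_condExp
  have hYcexp : ∀ c : ℝ, (μ[fun ω => (Y ω - c) ^ 2|mX]) =ᵐ[μ]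
      fun ω => (μ[fun ω' => Y ω' ^ 2|mX]) ω - 2 * c * (μ[Y|mX]) ω + c ^ 2 := by
    intro c
    have hint1 : Integrable (fun ω => Y ω ^ 2 - 2 * c * Y ω) μ := by
      refine (intY2.sub (intY.const_mul (2 * c))).congr
        (Filter.Eventually.of_forall fun ω => ?_)
      simp only [Pi.sub_apply]
    have hd : (fun ω => (Y ω - c) ^ 2)
        = (fun ω => Y ω ^ 2 - 2 * c * Y ω) + (fun _ => c ^ 2) := by
      funext ω; simp only [Pi.add_apply]; ring
    rw [hd]
    have hadd := condExp_add (μ := μ) (m := mX) hint1 (integrable_const (c ^ 2))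
    refine hadd.trans ?_
    have hd2 : (fun ω => Y ω ^ 2 - 2 * c * Y ω)
        = (fun ω => Y ω ^ 2) - (fun ω => 2 * c * Y ω) := by
      funext ω; simp only [Pi.sub_apply]
    have hsub := condExp_sub (μ := μ) (m := mX) intY2 (intY.const_mul (2 * c))
    have hpullc : (μ[(fun ω => (2 * c) * Y ω)|mX]) =ᵐ[μ]
        fun ω => (2 * c) * (μ[Y|mX]) ω :=
      condExp_mul_of_stronglyMeasurable_left stronglyMeasurable_const
        (intY.const_mul (2 * c)) intY
    have hconst : (μ[(fun _ : Ω => c ^ 2)|mX]) = fun _ => c ^ 2 := condExp_const hmX _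
    rw [hd2]
    filter_upwards [hsub, hpullc] with ω h1 h2
    simp only [Pi.add_apply, Pi.sub_apply, hconst, h1, h2]
  have hYsqnn : ∀ c : ℝ, (0 : Ω → ℝ) ≤ᵐ[μ] (μ[fun ω => (Y ω - c) ^ 2|mX]) := fun c =>
    condExp_nonneg (Filter.Eventually.of_forall fun ω => sq_nonneg _)
  have hae_all : ∀ᵐ ω ∂μ, ∀ c : ℚ,
      0 ≤ (μ[fun ω' => Y ω' ^ 2|mX]) ω - 2 * (c : ℝ) * (μ[Y|mX]) ω + (c : ℝ) ^ 2 := by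
    rw [MeasureTheory.ae_all_iff]
    intro c
    filter_upwards [hYcexp (c : ℝ), hYsqnn (c : ℝ)] with ω h1 h2
    simp only [Pi.zero_apply] at h2
    rw [h1] at h2
    exact h2
  have hm2q : ∀ᵐ ω ∂μ, ((μ[Y|mX]) ω) ^ 2 ≤ (μ[fun ω' => Y ω' ^ 2|mX]) ω := by
    filter_upwards [hae_all] with ω hall
    by_contra hlt
    push_neg at hlt
    have hpos : 0 < ((μ[Y|mX]) ω) ^ 2 - (μ[fun ω' => Y ω' ^ 2|mX]) ω := by linarith
    obtain ⟨c, hc⟩ := exists_rat_near ((μ[Y|mX]) ω) (Real.sqrt_pos.mpr hpos)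
    have hsq : ((μ[Y|mX]) ω - (c : ℝ)) ^ 2
        < ((μ[Y|mX]) ω) ^ 2 - (μ[fun ω' => Y ω' ^ 2|mX]) ω := by
      have h1 : |(μ[Y|mX]) ω - (c : ℝ)| ^ 2
          < Real.sqrt (((μ[Y|mX]) ω) ^ 2 - (μ[fun ω' => Y ω' ^ 2|mX]) ω) ^ 2 := by
        apply sq_lt_sq' <;> nlinarith [abs_nonneg ((μ[Y|mX]) ω - (c : ℝ)),
          Real.sqrt_nonneg (((μ[Y|mX]) ω) ^ 2 - (μ[fun ω' => Y ω' ^ 2|mX]) ω),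
          le_abs_self ((μ[Y|mX]) ω - (c : ℝ))]
      rwa [sq_abs, Real.sq_sqrt (le_of_lt hpos)] at h1
    have h0 := hall c
    nlinarith [hsq, h0]
  have intm2 : Integrable (fun ω => ((μ[Y|mX]) ω) ^ 2) μ := by
    refine hq2int.mono' (((hmSM.mono hmX).measurable.pow_const 2).aestronglyMeasurable) ?_
    filter_upwards [hm2q] with ω h1
    rw [Real.norm_eq_abs, abs_of_nonneg (sq_nonneg _)]
    exact h1
  have hm2 : MemLp (μ[Y|mX]) 2 μ := (memLp_two_iff_integrable_sq hmAESM).mpr intm2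
  -- conditional variance decomposition
  have hdec : ∀ q : Ω → ℝ, MemLp q 2 μ → StronglyMeasurable[mX] q →
      (μ[fun ω => (Y ω - q ω) ^ 2|mX]) =ᵐ[μ]
      fun ω => (μ[fun ω' => (Y ω' - (μ[Y|mX]) ω') ^ 2|mX]) ω
        + ((μ[Y|mX]) ω - q ω) ^ 2 := by
    intro q hq2 hqSM
    have hqint : Integrable q μ := hq2.integrable one_le_two
    have hYm2 : MemLp (fun ω => Y ω - (μ[Y|mX]) ω) 2 μ := hY2.sub hm2
    have int1 : Integrable (fun ω => (Y ω - (μ[Y|mX]) ω) ^ 2) μ := hYm2.integrable_sq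
    have hg2mem : MemLp (fun ω => 2 * Y ω - (μ[Y|mX]) ω - q ω) 2 μ := by
      refine ((hY2.const_mul 2).sub hm2).sub hq2 |>.ae_eq
        (Filter.Eventually.of_forall fun ω => ?_)
      simp only [Pi.sub_apply]
    have int2 : Integrable (fun ω =>
        ((μ[Y|mX]) ω - q ω) * (2 * Y ω - (μ[Y|mX]) ω - q ω)) μ :=
      integrable_mul_of_memL2 (hm2.sub hq2) hg2mem
    have intg : Integrable (fun ω => 2 * Y ω - (μ[Y|mX]) ω - q ω) μ :=
      hg2mem.integrable one_le_two
    have hd : (fun ω => (Y ω - q ω) ^ 2)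
        = (fun ω => (Y ω - (μ[Y|mX]) ω) ^ 2)
          + (fun ω => ((μ[Y|mX]) ω - q ω) * (2 * Y ω - (μ[Y|mX]) ω - q ω)) := by
      funext ω; simp only [Pi.add_apply]; ring
    rw [hd]
    have hadd := condExp_add (μ := μ) (m := mX) int1 int2
    refine hadd.trans ?_
    have hpull : (μ[(fun ω =>
        ((μ[Y|mX]) ω - q ω) * (2 * Y ω - (μ[Y|mX]) ω - q ω))|mX]) =ᵐ[μ]
        fun ω => ((μ[Y|mX]) ω - q ω) *
          (μ[fun ω' => 2 * Y ω' - (μ[Y|mX]) ω' - q ω'|mX]) ω :=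
      condExp_mul_of_stronglyMeasurable_left (stronglyMeasurable_condExp.sub hqSM) int2 intg
    have hsub1 : (fun ω => 2 * Y ω - (μ[Y|mX]) ω - q ω)
        = ((fun ω => 2 * Y ω) - (μ[Y|mX])) - q := by
      funext ω; simp only [Pi.sub_apply]
    have hce2Y : (μ[(fun ω => 2 * Y ω)|mX]) =ᵐ[μ] fun ω => 2 * (μ[Y|mX]) ω :=
      condExp_mul_of_stronglyMeasurable_left stronglyMeasurable_const (intY.const_mul 2) intY
    have hcem : (μ[(μ[Y|mX])|mX]) = μ[Y|mX] :=
      condExp_of_stronglyMeasurable hmX stronglyMeasurable_condExp integrable_condExp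
    have hceq : (μ[q|mX]) = q := condExp_of_stronglyMeasurable hmX hqSM hqint
    have hceg : (μ[fun ω => 2 * Y ω - (μ[Y|mX]) ω - q ω|mX]) =ᵐ[μ]
        fun ω => (μ[Y|mX]) ω - q ω := by
      rw [hsub1]
      have hs1 := condExp_sub (μ := μ) (m := mX)
        ((intY.const_mul 2).sub (integrable_condExp (f := Y) (m := mX))) hqint
      refine hs1.trans ?_
      have hs2 := condExp_sub (μ := μ) (m := mX) (intY.const_mul 2) (integrable_condExp (f := Y) (m := mX))
      filter_upwards [hs2, hce2Y] with ω h1 h2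
      simp only [Pi.sub_apply, hceq, hcem] at h1 ⊢
      rw [h1, h2]
      ring
    filter_upwards [hpull, hceg] with ω h1 h2
    simp only [Pi.add_apply, h1, h2]
    ring
  -- specializations of the decomposition
  have hdecμf : (μ[fun ω => (Y ω - μf (X ω)) ^ 2|mX]) =ᵐ[μ]
      fun ω => (μ[fun ω' => (Y ω' - (μ[Y|mX]) ω') ^ 2|mX]) ω
        + ((μ[Y|mX]) ω - μf (X ω)) ^ 2 :=
    hdec (fun ω => μf (X ω)) hμf2 hμfXSM
  have hdecθ : (μ[fun ω => (Y ω - θ₀) ^ 2|mX]) =ᵐ[μ]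
      fun ω => (μ[fun ω' => (Y ω' - (μ[Y|mX]) ω') ^ 2|mX]) ω
        + ((μ[Y|mX]) ω - θ₀) ^ 2 :=
    hdec (fun _ => θ₀) (memLp_const θ₀) stronglyMeasurable_const
  have hg2low : ∀ᵐ ω ∂μ, σ₁ ^ 2 ≤ (μ[fun ω' => (Y ω' - μf (X ω')) ^ 2|mX]) ω := by
    filter_upwards [hdecμf, hlow] with ω h1 h2
    rw [h1]; nlinarith [sq_nonneg ((μ[Y|mX]) ω - μf (X ω))]
  have hS2cond_low : ∀ᵐ ω ∂μ, σ₁ ^ 2 ≤ (μ[fun ω' => (Y ω' - θ₀) ^ 2|mX]) ω := by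
    filter_upwards [hdecθ, hlow] with ω h1 h2
    rw [h1]; nlinarith [sq_nonneg ((μ[Y|mX]) ω - θ₀)]
  -- integrals of U-terms vanish / identify
  have hintUzero : ∫ ω, (R ω / (μ[R|mX]) ω - 1) * (Y ω - μf (X ω)) ∂μ = 0 := by
    rw [← integral_condExp (μ := μ)
      (f := fun ω => (R ω / (μ[R|mX]) ω - 1) * (Y ω - μf (X ω))) hmX,
      integral_congr_ae hUce]
    simp
  have hintSUzero : ∫ ω, (Y ω - θ₀) *
      ((R ω / (μ[R|mX]) ω - 1) * (Y ω - μf (X ω))) ∂μ = 0 := by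
    rw [← integral_condExp (μ := μ) (f := fun ω => (Y ω - θ₀) *
      ((R ω / (μ[R|mX]) ω - 1) * (Y ω - μf (X ω)))) hmX,
      integral_congr_ae hSUce]
    simp
  have hintU2eq : ∫ ω, ((R ω / (μ[R|mX]) ω - 1) * (Y ω - μf (X ω))) ^ 2 ∂μ
      = ∫ ω, (((μ[R|mX]) ω)⁻¹ - 1) *
          (μ[fun ω' => (Y ω' - μf (X ω')) ^ 2|mX]) ω ∂μ := by
    rw [← integral_condExp (μ := μ) (f := fun ω =>
      ((R ω / (μ[R|mX]) ω - 1) * (Y ω - μf (X ω))) ^ 2) hmX]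
    exact integral_congr_ae hU2ce
  have hψint : ∫ ω, ψ ω ∂μ = 0 := by
    have hpt : ψ = fun ω => (Y ω - θ₀)
        + (R ω / (μ[R|mX]) ω - 1) * (Y ω - μf (X ω)) := by
      funext ω; rw [hψ]; ring
    rw [hpt, integral_add intS intU, hintUzero,
      integral_sub intY (integrable_const θ₀), integral_const]
    simp [hθ₀]
  -- variance decomposition
  have hvar : variance ψ μ = (∫ ω, (Y ω - θ₀) ^ 2 ∂μ)
      + ∫ ω, (((μ[R|mX]) ω)⁻¹ - 1) *
          (μ[fun ω' => (Y ω' - μf (X ω')) ^ 2|mX]) ω ∂μ := by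
    have hsq : ∫ ω, (ψ ^ 2) ω ∂μ = ∫ ω, ((Y ω - θ₀) ^ 2
        + (2 * ((Y ω - θ₀) * ((R ω / (μ[R|mX]) ω - 1) * (Y ω - μf (X ω))))
          + ((R ω / (μ[R|mX]) ω - 1) * (Y ω - μf (X ω))) ^ 2)) ∂μ :=
      integral_congr_ae (Filter.Eventually.of_forall fun ω => by
        simp only [Pi.pow_apply, hψ]; ring)
    have intSU2 : Integrable (fun ω => 2 * ((Y ω - θ₀) *
        ((R ω / (μ[R|mX]) ω - 1) * (Y ω - μf (X ω))))) μ := intSU.const_mul 2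
    have intMid : Integrable (fun ω => 2 * ((Y ω - θ₀) *
        ((R ω / (μ[R|mX]) ω - 1) * (Y ω - μf (X ω))))
        + ((R ω / (μ[R|mX]) ω - 1) * (Y ω - μf (X ω))) ^ 2) μ := intSU2.add intU2
    rw [variance_eq_sub hψ2, hψint, hsq,
      integral_add intS2 intMid,
      integral_add intSU2 intU2, integral_const_mul,
      hintSUzero, hintU2eq]
    ring
  -- ∫ S² equals variance of Y and is at least σ₁²
  have hS2eq : ∫ ω, (Y ω - θ₀) ^ 2 ∂μ = variance Y μ := by
    rw [variance_eq_integral hY.aemeasurable]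
    refine integral_congr_ae (Filter.Eventually.of_forall fun ω => ?_)
    simp only [Pi.pow_apply, Pi.sub_apply, hθ₀]
  have hS2low : σ₁ ^ 2 ≤ ∫ ω, (Y ω - θ₀) ^ 2 ∂μ := by
    rw [← integral_condExp (μ := μ) (f := fun ω => (Y ω - θ₀) ^ 2) hmX]
    have h2 := integral_mono_ae (μ := μ) (integrable_const (σ₁ ^ 2))
      integrable_condExp hS2cond_low
    simpa [measure_univ] using h2
  -- facts about a and c₀
  have hπinv1 : ∀ᵐ ω ∂μ, 1 ≤ ((μ[R|mX]) ω)⁻¹ := by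
    filter_upwards [hπ] with ω h
    have h1 : 0 < ((μ[R|mX]) ω)⁻¹ := inv_pos.mpr h.1
    nlinarith [inv_mul_cancel₀ (ne_of_gt h.1), mul_lt_mul_of_pos_left h.2 h1]
  have hc0 : 1 ≤ ∫ ω, ((μ[R|mX]) ω)⁻¹ ∂μ := by
    have h2 := integral_mono_ae (μ := μ) (integrable_const (1 : ℝ)) hπinv hπinv1
    simpa [measure_univ] using h2
  have ha0 : 0 ≤ a := by
    rw [ha]; exact inv_nonneg.mpr (by linarith)
  have hac : a * (∫ ω, ((μ[R|mX]) ω)⁻¹ ∂μ) = 1 := by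
    rw [ha]; exact inv_mul_cancel₀ (by linarith)
  -- bounds on the weighted term
  have intg2π : Integrable (fun ω => (((μ[R|mX]) ω)⁻¹ - 1) *
      (μ[fun ω' => (Y ω' - μf (X ω')) ^ 2|mX]) ω) μ :=
    Integrable.congr integrable_condExp hU2ce
  have intπm1 : Integrable (fun ω => ((μ[R|mX]) ω)⁻¹ - 1) μ :=
    hπinv.sub (integrable_const 1)
  have hintπm1 : ∫ ω, (((μ[R|mX]) ω)⁻¹ - 1) ∂μ
      = (∫ ω, ((μ[R|mX]) ω)⁻¹ ∂μ) - 1 := by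
    rw [integral_sub hπinv (integrable_const 1)]
    simp [measure_univ]
  have hI1low : ((∫ ω, ((μ[R|mX]) ω)⁻¹ ∂μ) - 1) * σ₁ ^ 2
      ≤ ∫ ω, (((μ[R|mX]) ω)⁻¹ - 1) *
          (μ[fun ω' => (Y ω' - μf (X ω')) ^ 2|mX]) ω ∂μ := by
    rw [← hintπm1, ← integral_mul_const]
    refine integral_mono_ae (intπm1.mul_const _) intg2π ?_
    filter_upwards [hπinv1, hg2low] with ω h1 h2
    exact mul_le_mul_of_nonneg_left h2 (by linarith)
  have hI1up : (∫ ω, (((μ[R|mX]) ω)⁻¹ - 1) *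
        (μ[fun ω' => (Y ω' - μf (X ω')) ^ 2|mX]) ω ∂μ)
      ≤ ((∫ ω, ((μ[R|mX]) ω)⁻¹ ∂μ) - 1) * σ₂ ^ 2 := by
    rw [← hintπm1, ← integral_mul_const]
    refine integral_mono_ae intg2π (intπm1.mul_const _) ?_
    filter_upwards [hπinv1, hup] with ω h1 h2
    exact mul_le_mul_of_nonneg_left h2 (by linarith)
  -- conclusion
  have hvarlow : σ₁ ^ 2 * (∫ ω, ((μ[R|mX]) ω)⁻¹ ∂μ) ≤ variance ψ μ := by
    rw [hvar]
    nlinarith [hS2low, hI1low]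
  have hvarup : variance ψ μ ≤ σ₂ ^ 2 * (∫ ω, ((μ[R|mX]) ω)⁻¹ ∂μ) := by
    rw [hvar]
    nlinarith [hS2eq, hVarY, hI1up]
  constructor
  · have h := mul_le_mul_of_nonneg_left hvarlow ha0
    calc σ₁ ^ 2 = a * (σ₁ ^ 2 * (∫ ω, ((μ[R|mX]) ω)⁻¹ ∂μ)) := by
          rw [show a * (σ₁ ^ 2 * (∫ ω, ((μ[R|mX]) ω)⁻¹ ∂μ))
            = σ₁ ^ 2 * (a * (∫ ω, ((μ[R|mX]) ω)⁻¹ ∂μ)) from by ring, hac, mul_one]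
      _ ≤ a * variance ψ μ := h
  · have h := mul_le_mul_of_nonneg_left hvarup ha0
    calc a * variance ψ μ ≤ a * (σ₂ ^ 2 * (∫ ω, ((μ[R|mX]) ω)⁻¹ ∂μ)) := h
      _ = σ₂ ^ 2 := by
          rw [show a * (σ₂ ^ 2 * (∫ ω, ((μ[R|mX]) ω)⁻¹ ∂μ))
            = σ₂ ^ 2 * (a * (∫ ω, ((μ[R|mX]) ω)⁻¹ ∂μ)) from by ring, hac, mul_one]
end

section
/- Under MCAR (π(X) ≡ π constant), with influence functions ψ_μ(Z) = (R/π)(Y − μ(X)) + μ(X) − θ₀ and Ψ(Z) = ψ_μ(Z) + ((R−π)/π)·Δ_μ where Δ_μ = E[μ(X) − m(X)], one has Var(ψ_μ(Z)) = Var(Ψ(Z)) + (π^{−1} − 1)·Δ_μ², so Var(ψ_μ(Z)) ≥ Var(Ψ(Z)) with strict inequality whenever Δ_μ ≠ 0 and π < 1. -/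
open MeasureTheory ProbabilityTheory

/-- Under MCAR (`R` independent of `(Y, X)` with `P(R=1) = π ∈ (0,1)`), with
`ψ_μ(Z) = (R/π)(Y − μf(X)) + μf(X) − θ₀` and `Ψ(Z) = ψ_μ(Z) + ((R−π)/π)·Δ` where
`Δ = E[μf(X) − m(X)]`, one has `Var(ψ_μ) = Var(Ψ) + (π⁻¹ − 1)Δ²`; hence
`Var(Ψ) ≤ Var(ψ_μ)`, strictly whenever `Δ ≠ 0`. -/
theorem mcar_variance_decomposition {Ω : Type*} [mΩ : MeasurableSpace Ω]
    (μ : Measure Ω) [IsProbabilityMeasure μ] {p : ℕ}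
    (X : Ω → Fin p → ℝ) (hX : Measurable X) (R : Ω → ℝ) (hR : Measurable R)
    (hRbin : ∀ ω, R ω = 0 ∨ R ω = 1) (Y : Ω → ℝ) (hY : Measurable Y)
    (hY2 : MemLp Y 2 μ)
    (hindep : IndepFun R (fun ω => (Y ω, X ω)) μ)
    (π : ℝ) (hπ : π ∈ Set.Ioo (0 : ℝ) 1) (hπdef : ∫ ω, R ω ∂μ = π)
    (μf : (Fin p → ℝ) → ℝ) (hμf : Measurable μf)
    (hμf2 : MemLp (fun ω => μf (X ω)) 2 μ)
    (mX : MeasurableSpace Ω) (hmXdef : mX = MeasurableSpace.comap X inferInstance)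
    (hmX : mX ≤ mΩ)
    (θ₀ Δ : ℝ) (hθ₀ : θ₀ = ∫ ω, Y ω ∂μ)
    (hΔ : Δ = ∫ ω, (μf (X ω) - (μ[Y | mX]) ω) ∂μ)
    (ψ Ψ : Ω → ℝ)
    (hψ : ψ = fun ω => (R ω / π) * (Y ω - μf (X ω)) + μf (X ω) - θ₀)
    (hΨ : Ψ = fun ω => ψ ω + ((R ω - π) / π) * Δ) :
    variance ψ μ = variance Ψ μ + (π⁻¹ - 1) * Δ ^ 2 ∧
      variance Ψ μ ≤ variance ψ μ ∧
      (Δ ≠ 0 → variance Ψ μ < variance ψ μ) := by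
  obtain ⟨hπ0, hπ1⟩ := hπ
  have hπne : π ≠ 0 := ne_of_gt hπ0
  -- basic integrability facts
  have hYint : Integrable Y μ := hY2.integrable one_le_two
  have hmint : Integrable (fun ω => μf (X ω)) μ := hμf2.integrable one_le_two
  have hRbd : ∀ ω, ‖R ω‖ ≤ 1 := by
    intro ω; rcases hRbin ω with h | h <;> simp [h]
  have hRasm : AEStronglyMeasurable[mΩ] R μ := hR.aestronglyMeasurable
  have hR2 : MemLp R 2 μ := MemLp.of_bound hRasm 1 (Filter.Eventually.of_forall hRbd)
  have hRint : Integrable R μ := hR2.integrable one_le_two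
  have hRsq : ∀ ω, R ω * R ω = R ω := by
    intro ω; rcases hRbin ω with h | h <;> simp [h]
  -- independence consequences
  have hRY : IndepFun R Y μ := hindep.comp measurable_id measurable_fst
  have hRm : IndepFun R (fun ω => μf (X ω)) μ :=
    hindep.comp measurable_id (hμf.comp measurable_snd)
  have hRYint : Integrable (fun ω => R ω * Y ω) μ := hYint.bdd_mul hRasm (Filter.Eventually.of_forall hRbd)
  have hRmint : Integrable (fun ω => R ω * μf (X ω)) μ := hmint.bdd_mul hRasm (Filter.Eventually.of_forall hRbd)
  set a : ℝ := ∫ ω, Y ω ∂μ with ha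
  set b : ℝ := ∫ ω, μf (X ω) ∂μ with hb
  have hIRY : ∫ ω, R ω * Y ω ∂μ = π * a := by
    have e : (fun ω => R ω * Y ω) = R * Y := rfl
    rw [e, hRY.integral_mul_eq_mul_integral hRasm hYint.1, hπdef]
  have hIRm : ∫ ω, R ω * μf (X ω) ∂μ = π * b := by
    have e : (fun ω => R ω * μf (X ω)) = R * fun ω => μf (X ω) := rfl
    rw [e, hRm.integral_mul_eq_mul_integral hRasm hmint.1, hπdef]
  -- value of Δ
  have hΔval : Δ = b - a := by
    rw [hΔ, integral_sub hmint integrable_condExp, integral_condExp hmX, ← ha, ← hb]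
  -- pointwise rewriting of ψ
  have hψ' : ψ = fun ω => π⁻¹ * (R ω * Y ω) - π⁻¹ * (R ω * μf (X ω)) + (μf (X ω) - θ₀) := by
    funext ω; simp only [hψ]; field_simp; ring
  -- ψ is in L²
  have hmul2 : ∀ (f : Ω → ℝ), MemLp f 2 μ → MemLp (fun ω => R ω * f ω) 2 μ := by
    intro f hf
    refine MemLp.of_le hf (hRasm.mul hf.aestronglyMeasurable)
      (Filter.Eventually.of_forall fun ω => ?_)
    rw [norm_mul]
    exact mul_le_of_le_one_left (norm_nonneg _) (hRbd ω)
  have hψ2 : MemLp ψ 2 μ := by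
    rw [hψ']
    exact ((((hmul2 Y hY2).const_mul π⁻¹).sub ((hmul2 _ hμf2).const_mul π⁻¹)).add
      (hμf2.sub (memLp_const θ₀)))
  have hψint : Integrable ψ μ := hψ2.integrable one_le_two
  have hψp : ∀ ω, ψ ω = π⁻¹ * (R ω * Y ω) - π⁻¹ * (R ω * μf (X ω)) + (μf (X ω) - θ₀) :=
    fun ω => by simp only [hψ']
  have hint1 : Integrable (fun ω => π⁻¹ * (R ω * Y ω) - π⁻¹ * (R ω * μf (X ω))) μ :=
    (hRYint.const_mul _).sub (hRmint.const_mul _)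
  have hint2 : Integrable (fun ω => μf (X ω) - θ₀) μ := hmint.sub (integrable_const _)
  -- mean of ψ is zero
  have hIψ : ∫ ω, ψ ω ∂μ = 0 := by
    rw [integral_congr_ae (Filter.Eventually.of_forall hψp),
      integral_add hint1 hint2,
      integral_sub (hRYint.const_mul _) (hRmint.const_mul _),
      integral_const_mul, integral_const_mul,
      integral_sub hmint (integrable_const _), integral_const, hIRY, hIRm, ← hb]
    simp only [measure_univ, probReal_univ, ENNReal.toReal_one, smul_eq_mul, one_mul]
    rw [hθ₀]
    field_simp
    ring
  -- pointwise rewriting of Ψ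
  have hc : Ψ = fun ω => ψ ω + (Δ / π) * (R ω - π) := by
    funext ω; simp only [hΨ]; ring
  have hS2 : MemLp (fun ω => R ω - π) 2 μ := hR2.sub (memLp_const π)
  have hSint : Integrable (fun ω => R ω - π) μ := hRint.sub (integrable_const _)
  have hSbd : ∀ ω, ‖R ω - π‖ ≤ 1 + π := by
    intro ω
    calc ‖R ω - π‖ ≤ ‖R ω‖ + ‖π‖ := norm_sub_le _ _
      _ ≤ 1 + π := by
          have := hRbd ω
          have : ‖π‖ = π := by rw [Real.norm_eq_abs, abs_of_pos hπ0]
          linarith [hRbd ω, this.le, this.ge]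
  have hΨ2 : MemLp Ψ 2 μ := by
    rw [hc]; exact hψ2.add (hS2.const_mul (Δ / π))
  -- mean of Ψ is zero
  have hIS : ∫ ω, (R ω - π) ∂μ = 0 := by
    rw [integral_sub hRint (integrable_const _), hπdef, integral_const]
    simp
  have hIΨ : ∫ ω, Ψ ω ∂μ = 0 := by
    have hcp : ∀ ω, Ψ ω = ψ ω + (Δ / π) * (R ω - π) := fun ω => by simp only [hc]
    rw [integral_congr_ae (Filter.Eventually.of_forall hcp),
      integral_add hψint (hSint.const_mul _), hIψ, integral_const_mul, hIS]
    ring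
  -- ∫ R ψ
  have hRψint : Integrable (fun ω => R ω * ψ ω) μ := hψint.bdd_mul hRasm (Filter.Eventually.of_forall hRbd)
  have hIRψ : ∫ ω, R ω * ψ ω ∂μ = (1 - π) * (a - b) := by
    have key : ∀ ω, R ω * ψ ω
        = π⁻¹ * (R ω * Y ω) - π⁻¹ * (R ω * μf (X ω)) + (R ω * μf (X ω) - θ₀ * R ω) := by
      intro ω
      have h := hRsq ω
      rw [hψp ω]
      linear_combination (π⁻¹ * (Y ω - μf (X ω))) * h
    have hint3 : Integrable (fun ω => R ω * μf (X ω) - θ₀ * R ω) μ :=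
      hRmint.sub (hRint.const_mul _)
    rw [integral_congr_ae (Filter.Eventually.of_forall key),
      integral_add hint1 hint3,
      integral_sub (hRYint.const_mul _) (hRmint.const_mul _),
      integral_const_mul, integral_const_mul,
      integral_sub hRmint (hRint.const_mul _),
      integral_const_mul, hIRY, hIRm, hπdef, hθ₀]
    field_simp
    ring
  -- ∫ (R - π) ψ
  have hSψint : Integrable (fun ω => (R ω - π) * ψ ω) μ :=
    hψint.bdd_mul ((hR.sub measurable_const).aestronglyMeasurable) (Filter.Eventually.of_forall hSbd)
  have hISψ : ∫ ω, (R ω - π) * ψ ω ∂μ = (1 - π) * (a - b) := by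
    have key : ∀ ω, (R ω - π) * ψ ω = R ω * ψ ω - π * ψ ω := by intro ω; ring
    rw [integral_congr_ae (Filter.Eventually.of_forall key),
      integral_sub hRψint (hψint.const_mul _), integral_const_mul, hIψ, hIRψ]
    ring
  -- ∫ (R - π)²
  have hSsqint : Integrable (fun ω => (R ω - π) ^ 2) μ := hS2.integrable_sq
  have hISsq : ∫ ω, (R ω - π) ^ 2 ∂μ = π - π ^ 2 := by
    have key : ∀ ω, (R ω - π) ^ 2 = R ω - 2 * π * R ω + π ^ 2 := by
      intro ω
      have h := hRsq ω
      linear_combination h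
    have hint4 : Integrable (fun ω => R ω - 2 * π * R ω) μ := hRint.sub (hRint.const_mul _)
    rw [integral_congr_ae (Filter.Eventually.of_forall key),
      integral_add hint4 (integrable_const _),
      integral_sub hRint (hRint.const_mul _), integral_const_mul, hπdef, integral_const]
    simp only [measure_univ, probReal_univ, ENNReal.toReal_one, smul_eq_mul, one_mul]
    ring
  -- variance computations
  have hψsqint : Integrable (fun ω => ψ ω ^ 2) μ := hψ2.integrable_sq
  have hvarψ : variance ψ μ = ∫ ω, ψ ω ^ 2 ∂μ := by
    rw [variance_eq_sub hψ2, hIψ]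
    simp [Pi.pow_apply]
  have hIΨsq : ∫ ω, Ψ ω ^ 2 ∂μ = (∫ ω, ψ ω ^ 2 ∂μ) - (π⁻¹ - 1) * Δ ^ 2 := by
    have key : ∀ ω, Ψ ω ^ 2
        = ψ ω ^ 2 + (2 * (Δ / π) * ((R ω - π) * ψ ω) + (Δ / π) ^ 2 * (R ω - π) ^ 2) := by
      intro ω; simp only [hc]; ring
    have hint5 : Integrable (fun ω => 2 * (Δ / π) * ((R ω - π) * ψ ω)
        + (Δ / π) ^ 2 * (R ω - π) ^ 2) μ := (hSψint.const_mul _).add (hSsqint.const_mul _)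
    rw [integral_congr_ae (Filter.Eventually.of_forall key),
      integral_add hψsqint hint5,
      integral_add (hSψint.const_mul _) (hSsqint.const_mul _),
      integral_const_mul, integral_const_mul, hISψ, hISsq, hΔval]
    field_simp
    ring
  have hvarΨ : variance Ψ μ = (∫ ω, ψ ω ^ 2 ∂μ) - (π⁻¹ - 1) * Δ ^ 2 := by
    rw [variance_eq_sub hΨ2, hIΨ]
    simp only [Pi.pow_apply]
    rw [hIΨsq]
    ring
  have hmain : variance ψ μ = variance Ψ μ + (π⁻¹ - 1) * Δ ^ 2 := by
    rw [hvarψ, hvarΨ]; ring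
  have hfac : 0 ≤ π⁻¹ - 1 := by
    have : 1 ≤ π⁻¹ := (one_le_inv_iff₀.mpr ⟨hπ0, hπ1.le⟩)
    linarith
  refine ⟨hmain, ?_, ?_⟩
  · nlinarith [sq_nonneg Δ]
  · intro hΔne
    have h1 : 0 < π⁻¹ - 1 := by
      have : 1 < π⁻¹ := (one_lt_inv_iff₀.mpr ⟨hπ0, hπ1⟩)
      linarith
    have h2 : 0 < Δ ^ 2 := by positivity
    nlinarith
end
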